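/- arXiv:2407.19771 — 4 statements merged into one kernel-verified Lean document; each statement's English description precedes it below -/
import Mathlib

section
/- Let p be a prime dividing the positive integer n, and let d be a divisor of n. Then the number of cyclic subgroups of Z_p × Z_n of order d equals: p, if p² divides d; p + 1, if p divides d but p² does not divide d; and 1, if p does not divide d. -/
open Polynomial

/-- The power graph of an additive group `G`: distinct vertices `x` and `y` are adjacent
iff one is an (integral) multiple of the other, i.e. `x ∈ ⟨y⟩` or `y ∈ ⟨x⟩`. -/
def addPowerGraph (G : Type*) [AddGroup G] : SimpleGraph G where
  Adj x y := x ≠ y ∧ (x ∈ AddSubgroup.zmultiples y ∨ y ∈ AddSubgroup.zmultiples x)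
  symm := by
    constructor
    intro x y h
    exact ⟨h.1.symm, h.2.symm⟩
  loopless := by
    constructor
    intro x h
    exact h.1 rfl

open Classical in
/-- The adjacency matrix (over `ℤ`) of a finite simple graph. -/
noncomputable def adjMat {V : Type*} [Fintype V] (G : SimpleGraph V) : Matrix V V ℤ :=
  fun i j => if G.Adj i j then 1 else 0

/-- The number of cyclic subgroups of order `d` of an additive group `G`. -/
noncomputable def numCyclicSubgroups (G : Type*) [AddGroup G] (d : ℕ) : ℕ :=
  Nat.card {H : AddSubgroup G // IsAddCyclic H ∧ Nat.card H = d}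

section Aux

open Finset AddSubgroup

lemma isAddCyclic_zmultiples' {G : Type*} [AddGroup G] (x : G) :
    IsAddCyclic (AddSubgroup.zmultiples x) := by
  refine ⟨⟨⟨x, AddSubgroup.mem_zmultiples x⟩, fun y => ?_⟩⟩
  obtain ⟨k, hk⟩ := (AddSubgroup.mem_zmultiples_iff).1 y.2
  exact ⟨k, Subtype.ext (by simpa using hk)⟩

lemma count_cyclic_mul_totient {G : Type*} [AddGroup G] [Fintype G] [DecidableEq G]
    (d : ℕ) :
    Nat.card {H : AddSubgroup G // IsAddCyclic H ∧ Nat.card H = d} * d.totient =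
      (Finset.univ.filter fun x : G => addOrderOf x = d).card := by
  classical
  set S : Finset G := Finset.univ.filter fun x : G => addOrderOf x = d with hS
  set T : Finset (AddSubgroup G) := S.image (fun x => zmultiples x) with hT
  have hsetmem : ∀ H : AddSubgroup G, (IsAddCyclic H ∧ Nat.card H = d) ↔ H ∈ T := by
    intro H
    constructor
    · rintro ⟨hcyc, hcard⟩
      obtain ⟨g, hg⟩ := hcyc.exists_generator
      have hord : addOrderOf (g : G) = d := by
        rw [AddSubgroup.addOrderOf_coe, addOrderOf_eq_card_of_forall_mem_zmultiples hg, hcard]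
      have hZ : zmultiples (g : G) = H := by
        apply le_antisymm (AddSubgroup.zmultiples_le.2 g.2)
        intro x hx
        obtain ⟨k, hk⟩ := hg ⟨x, hx⟩
        exact ⟨k, congrArg Subtype.val hk⟩
      rw [← hZ]
      exact Finset.mem_image_of_mem _ (by simp [hS, hord])
    · intro hH
      obtain ⟨x, hx, rfl⟩ := Finset.mem_image.1 hH
      simp only [hS, Finset.mem_filter] at hx
      exact ⟨isAddCyclic_zmultiples' x, by rw [Nat.card_zmultiples, hx.2]⟩
  have hmem : ∀ x ∈ S, zmultiples x ∈ T := fun x hx => Finset.mem_image_of_mem _ hx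
  rw [Finset.card_eq_sum_card_fiberwise hmem]
  have hfiber : ∀ H ∈ T, (S.filter fun x => zmultiples x = H).card = d.totient := by
    intro H hH
    have hHP := (hsetmem H).2 hH
    obtain ⟨hcyc, hcard⟩ := hHP
    haveI : IsAddCyclic H := hcyc
    have hcardH : Fintype.card H = d := by rw [← Nat.card_eq_fintype_card, hcard]
    rw [← IsAddCyclic.card_addOrderOf_eq_totient (α := H) (d := d) (by rw [hcardH])]
    apply Finset.card_bij (fun (x : G) hx => (⟨x, by
        have := (Finset.mem_filter.1 hx).2
        rw [← this]; exact AddSubgroup.mem_zmultiples x⟩ : H))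
    · intro x hx
      have hx' := Finset.mem_filter.1 hx
      have hx'' := (Finset.mem_filter.1 hx'.1).2
      simp only [Finset.mem_filter, Finset.mem_univ, true_and, AddSubgroup.addOrderOf_mk]
      exact hx''
    · intro a ha b hb hab
      exact congrArg Subtype.val hab
    · intro y hy
      have hy' := (Finset.mem_filter.1 hy).2
      have hyord : addOrderOf (y : G) = d := by rw [AddSubgroup.addOrderOf_coe, hy']
      have hzy : zmultiples (y : G) = H := by
        apply AddSubgroup.eq_of_le_of_card_ge (AddSubgroup.zmultiples_le.2 y.2)
        rw [hcard, Nat.card_zmultiples, hyord]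
      refine ⟨(y : G), ?_, rfl⟩
      exact Finset.mem_filter.2 ⟨by simp [hS, hyord], hzy⟩
  rw [Finset.sum_congr rfl hfiber, Finset.sum_const, smul_eq_mul]
  congr 1
  have : Nat.card {H : AddSubgroup G // IsAddCyclic H ∧ Nat.card H = d}
      = Nat.card {H : AddSubgroup G // H ∈ T} :=
    Nat.card_congr (Equiv.subtypeEquivRight hsetmem)
  rw [this, Nat.card_eq_fintype_card, Fintype.card_coe]

lemma zmod_count_order (n e : ℕ) [NeZero n] (he : e ∣ n) :
    (Finset.univ.filter fun b : ZMod n => addOrderOf b = e).card = e.totient :=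
  IsAddCyclic.card_addOrderOf_eq_totient (by rw [ZMod.card]; exact he)

lemma card_filter_prod {A B : Type*} [Fintype A] [Fintype B] [DecidableEq A]
    (Q : A × B → Prop) [DecidablePred Q] :
    (Finset.univ.filter Q).card = ∑ a : A, (Finset.univ.filter fun b => Q (a, b)).card := by
  rw [Finset.card_eq_sum_card_fiberwise (f := Prod.fst) (t := Finset.univ)
    (fun x _ => Finset.mem_univ _)]
  refine Finset.sum_congr rfl fun a _ => ?_
  refine Finset.card_bij' (fun x _ => x.2) (fun b _ => (a, b)) ?_ ?_ ?_ ?_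
  · intro x hx
    simp only [Finset.mem_filter, Finset.mem_univ, true_and] at hx ⊢
    have hx1 : x.1 = a := hx.2
    have : (a, x.2) = x := Prod.ext hx1.symm rfl
    rw [this]
    exact hx.1
  · intro b hb
    simp only [Finset.mem_filter, Finset.mem_univ, true_and] at hb ⊢
    exact ⟨hb, trivial⟩
  · intro x hx
    have hx1 : x.1 = a := (Finset.mem_filter.1 hx).2
    exact Prod.ext hx1.symm rfl
  · intro b hb
    rfl

lemma zmodp_order (p : ℕ) (hp : p.Prime) (a : ZMod p) :
    addOrderOf a = if a = 0 then 1 else p := by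
  haveI : NeZero p := ⟨hp.ne_zero⟩
  split_ifs with h
  · simp [h]
  · have hdvd : addOrderOf a ∣ p := by
      have := addOrderOf_dvd_card (x := a)
      rwa [ZMod.card] at this
    rcases hp.eq_one_or_self_of_dvd _ hdvd with h1 | h2
    · exact absurd (AddMonoid.addOrderOf_eq_one_iff.1 h1) h
    · exact h2

lemma lcm_prime_eq_iff_of_sq_dvd {p d e : ℕ} (hp : p.Prime) (h2 : p ^ 2 ∣ d) :
    Nat.lcm p e = d ↔ e = d := by
  have hpd : p ∣ d := dvd_trans (dvd_pow_self p two_ne_zero) h2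
  constructor
  · intro h
    by_cases hpe : p ∣ e
    · rw [← h, Nat.dvd_antisymm (Nat.lcm_dvd hpe dvd_rfl) (Nat.dvd_lcm_right p e)]
    · have hco : Nat.Coprime p e := (hp.coprime_iff_not_dvd).2 hpe
      rw [hco.lcm_eq_mul] at h
      exfalso
      apply hpe
      have : p * p ∣ p * e := by rw [h, ← pow_two]; exact h2
      exact (mul_dvd_mul_iff_left hp.pos.ne').1 this
  · rintro rfl
    exact Nat.dvd_antisymm (Nat.lcm_dvd hpd dvd_rfl) (Nat.dvd_lcm_right _ _)

lemma lcm_prime_eq_iff_of_dvd_not_sq {p d e : ℕ} (hp : p.Prime) (h1 : p ∣ d)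
    (h2 : ¬ p ^ 2 ∣ d) : Nat.lcm p e = d ↔ e = d ∨ e = d / p := by
  have hdp : d = p * (d / p) := (Nat.mul_div_cancel' h1).symm
  have hpdp : ¬ p ∣ d / p := by
    intro h
    apply h2
    calc p ^ 2 = p * p := by ring
    _ ∣ p * (d / p) := mul_dvd_mul_left p h
    _ = d := hdp.symm
  constructor
  · intro h
    by_cases hpe : p ∣ e
    · left
      rw [← h, Nat.dvd_antisymm (Nat.lcm_dvd hpe dvd_rfl) (Nat.dvd_lcm_right p e)]
    · right
      have hco : Nat.Coprime p e := (hp.coprime_iff_not_dvd).2 hpe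
      rw [hco.lcm_eq_mul] at h
      rw [← h, Nat.mul_div_cancel_left e hp.pos]
  · rintro (h | h)
    · subst h
      exact Nat.dvd_antisymm (Nat.lcm_dvd h1 dvd_rfl) (Nat.dvd_lcm_right _ _)
    · subst h
      have hco : Nat.Coprime p (d / p) := (hp.coprime_iff_not_dvd).2 hpdp
      rw [hco.lcm_eq_mul]
      exact hdp.symm

lemma lcm_prime_ne_of_not_dvd {p d e : ℕ} (h0 : ¬ p ∣ d) : Nat.lcm p e ≠ d := by
  intro h
  exact h0 (h ▸ Nat.dvd_lcm_left p e)

end Aux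

/-- For a prime `p` dividing `n` and a divisor `d` of `n`, the number of cyclic
subgroups of `Z_p × Z_n` of order `d` is `p` if `p² ∣ d`, `p + 1` if `p ∣ d` but
`p² ∤ d`, and `1` if `p ∤ d`. -/
theorem num_cyclic_subgroups_Zp_Zn (p n : ℕ) (hp : p.Prime) [NeZero n] (hpn : p ∣ n)
    (d : ℕ) (hd : d ∣ n) :
    (p ^ 2 ∣ d → numCyclicSubgroups (ZMod p × ZMod n) d = p) ∧
    (p ∣ d → ¬ p ^ 2 ∣ d → numCyclicSubgroups (ZMod p × ZMod n) d = p + 1) ∧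
    (¬ p ∣ d → numCyclicSubgroups (ZMod p × ZMod n) d = 1) := by
  classical
  haveI : NeZero p := ⟨hp.ne_zero⟩
  have hd0 : 0 < d := Nat.pos_of_ne_zero (by rintro rfl; exact (NeZero.ne n) (Nat.eq_zero_of_zero_dvd hd))
  have htot : 0 < d.totient := Nat.totient_pos.2 hd0
  -- the auxiliary count function
  set g : ℕ → ℕ := fun e =>
    (Finset.univ.filter fun b : ZMod n => Nat.lcm e (addOrderOf b) = d).card with hg
  have key : numCyclicSubgroups (ZMod p × ZMod n) d * d.totient =
      (Finset.univ.filter fun x : ZMod p × ZMod n => addOrderOf x = d).card :=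
    count_cyclic_mul_totient d
  have hC : (Finset.univ.filter fun x : ZMod p × ZMod n => addOrderOf x = d).card
      = ∑ a : ZMod p, g (addOrderOf a) := by
    rw [card_filter_prod (fun x : ZMod p × ZMod n => addOrderOf x = d)]
    refine Finset.sum_congr rfl fun a _ => ?_
    show _ = (Finset.univ.filter fun b : ZMod n =>
      Nat.lcm (addOrderOf a) (addOrderOf b) = d).card
    congr 1
    ext b
    simp [Prod.addOrderOf]
  have hsplit : ∑ a : ZMod p, g (addOrderOf a) = g 1 + (p - 1) * g p := by
    rw [← Finset.sum_filter_add_sum_filter_not Finset.univ (fun a : ZMod p => a = 0)]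
    have h1 : Finset.univ.filter (fun a : ZMod p => a = 0) = {0} := by
      ext a; simp
    have h2 : (Finset.univ.filter fun a : ZMod p => ¬ a = 0) = Finset.univ \ {0} := by
      ext a; simp
    rw [h1, Finset.sum_singleton, h2]
    congr 1
    · simp
    · rw [Finset.sum_congr rfl (fun a ha => by
          rw [zmodp_order p hp a, if_neg (by simpa using (Finset.mem_sdiff.1 ha).2)]),
        Finset.sum_const, smul_eq_mul]
      congr 1
      rw [Finset.card_sdiff_of_subset (by simp), Finset.card_univ, ZMod.card, Finset.card_singleton]
  have hg1 : g 1 = d.totient := by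
    show (Finset.univ.filter fun b : ZMod n => Nat.lcm 1 (addOrderOf b) = d).card = d.totient
    simp only [Nat.lcm_one_left]
    exact zmod_count_order n d hd
  rw [hC, hsplit, hg1] at key
  refine ⟨?_, ?_, ?_⟩
  · -- p^2 ∣ d
    intro h2
    have hgp : g p = d.totient := by
      show (Finset.univ.filter fun b : ZMod n => Nat.lcm p (addOrderOf b) = d).card = d.totient
      have : ∀ b : ZMod n, (Nat.lcm p (addOrderOf b) = d) ↔ addOrderOf b = d :=
        fun b => lcm_prime_eq_iff_of_sq_dvd hp h2
      simp only [this]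
      exact zmod_count_order n d hd
    rw [hgp] at key
    have : numCyclicSubgroups (ZMod p × ZMod n) d * d.totient = p * d.totient := by
      rw [key]
      have hp1 : 1 ≤ p := hp.pos
      cases' Nat.exists_eq_add_of_le hp1 with q hq
      subst hq
      simp [Nat.add_sub_cancel_left]
      ring
    exact Nat.eq_of_mul_eq_mul_right htot this
  · -- p ∣ d, ¬ p^2 ∣ d
    intro h1 h2
    have hdp : d = p * (d / p) := (Nat.mul_div_cancel' h1).symm
    have hpdp : ¬ p ∣ d / p := by
      intro h
      apply h2
      calc p ^ 2 = p * p := by ring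
      _ ∣ p * (d / p) := mul_dvd_mul_left p h
      _ = d := hdp.symm
    have hdpn : d / p ∣ n := dvd_trans (Nat.div_dvd_of_dvd h1) hd
    have hne : d ≠ d / p := by
      have := Nat.div_lt_self hd0 hp.one_lt
      omega
    have hgp : g p = d.totient + (d / p).totient := by
      show (Finset.univ.filter fun b : ZMod n => Nat.lcm p (addOrderOf b) = d).card
        = d.totient + (d / p).totient
      have : (Finset.univ.filter fun b : ZMod n => Nat.lcm p (addOrderOf b) = d)
          = (Finset.univ.filter fun b : ZMod n => addOrderOf b = d)
            ∪ (Finset.univ.filter fun b : ZMod n => addOrderOf b = d / p) := by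
        rw [← Finset.filter_or]
        apply Finset.filter_congr
        intro b _
        exact lcm_prime_eq_iff_of_dvd_not_sq hp h1 h2
      rw [this, Finset.card_union_of_disjoint, zmod_count_order n d hd,
        zmod_count_order n (d / p) hdpn]
      rw [Finset.disjoint_left]
      intro b hb hb'
      have e1 := (Finset.mem_filter.1 hb).2
      have e2 := (Finset.mem_filter.1 hb').2
      exact hne (e1.symm.trans e2)
    have hphi : d.totient = (p - 1) * (d / p).totient := by
      conv_lhs => rw [hdp]
      rw [Nat.totient_mul ((hp.coprime_iff_not_dvd).2 hpdp), Nat.totient_prime hp]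
    rw [hgp] at key
    have : numCyclicSubgroups (ZMod p × ZMod n) d * d.totient = (p + 1) * d.totient := by
      rw [key]
      cases' Nat.exists_eq_add_of_le hp.pos with q hq
      subst hq
      simp only [Nat.add_sub_cancel_left] at hphi ⊢
      rw [hphi]
      ring
    exact Nat.eq_of_mul_eq_mul_right htot this
  · -- ¬ p ∣ d
    intro h0
    have hgp : g p = 0 := by
      show (Finset.univ.filter fun b : ZMod n => Nat.lcm p (addOrderOf b) = d).card = 0
      rw [Finset.card_eq_zero, Finset.filter_eq_empty_iff]
      intro b _
      exact lcm_prime_ne_of_not_dvd h0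
    rw [hgp, Nat.mul_zero, Nat.add_zero] at key
    have : numCyclicSubgroups (ZMod p × ZMod n) d * d.totient = 1 * d.totient := by
      rw [key, one_mul]
    exact Nat.eq_of_mul_eq_mul_right htot this
end

section
/- Let p be a prime dividing the positive integer n, and let G = Z_p × Z_n. Then (X + 1)^α divides the characteristic polynomial of the adjacency matrix of the power graph P(G), where α = p·Σ_{d ∣ n, p² ∣ d} (φ(d) − 1) + (p+1)·Σ_{d ∣ n, p ∣ d, p² ∤ d} (φ(d) − 1) + Σ_{d ∣ n, p ∤ d} (φ(d) − 1). -/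
open Polynomial

open Finset AddSubgroup in
theorem key {G : Type*} [AddCommGroup G] [Fintype G] [DecidableEq G] (r : G → G)
    (hP1 : ∀ x, zmultiples (r x) = zmultiples x)
    (hP2 : ∀ x y, zmultiples x = zmultiples y → r x = r y) :
    ((X : Polynomial ℤ) + 1) ^ (univ.filter fun x : G => r x ≠ x).card ∣
      Matrix.charpoly (adjMat (addPowerGraph G)) := by
  classical
  set A := adjMat (addPowerGraph G) with hA
  have hrr : ∀ x, r (r x) = r x := fun x => hP2 _ _ (hP1 x)
  -- adjacency facts
  have hAxx : ∀ x, A x x = 0 := by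
    intro x; simp [hA, adjMat]
  have hAdjr : ∀ x, r x ≠ x → A (r x) x = 1 := by
    intro x hx
    have : (addPowerGraph G).Adj (r x) x := by
      refine ⟨hx, Or.inr ?_⟩
      rw [hP1]; exact mem_zmultiples x
    simp [hA, adjMat, this]
  have hAdjr' : ∀ x, r x ≠ x → A x (r x) = 1 := by
    intro x hx
    have : (addPowerGraph G).Adj x (r x) := by
      refine ⟨fun h => hx h.symm, Or.inl ?_⟩
      rw [hP1]; exact mem_zmultiples x
    simp [hA, adjMat, this]
  have htwin : ∀ x z, z ≠ x → z ≠ r x → A x z = A (r x) z := by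
    intro x z hzx hzrx
    have hadj : (addPowerGraph G).Adj x z ↔ (addPowerGraph G).Adj (r x) z := by
      show (x ≠ z ∧ (x ∈ zmultiples z ∨ z ∈ zmultiples x)) ↔
        (r x ≠ z ∧ (r x ∈ zmultiples z ∨ z ∈ zmultiples (r x)))
      have h1 : x ∈ zmultiples z ↔ r x ∈ zmultiples z := by
        rw [← zmultiples_le, ← zmultiples_le, hP1]
      have h2 : z ∈ zmultiples x ↔ z ∈ zmultiples (r x) := by rw [hP1]
      rw [h1, h2]
      simp [Ne.symm hzx, Ne.symm hzrx]
    simp only [hA, adjMat]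
    by_cases h : (addPowerGraph G).Adj x z
    · rw [if_pos h, if_pos (hadj.mp h)]
    · rw [if_neg h, if_neg (fun h' => h (hadj.mpr h'))]
  set C0 := Matrix.charmatrix A with hC0
  set F : Matrix G G ℤ[X] := fun x z => if r x ≠ x ∧ z = r x then 1 else 0 with hF
  have hF2 : F * F = 0 := by
    refine Matrix.ext fun x z => ?_
    rw [Matrix.zero_apply]
    rw [Matrix.mul_apply]
    refine Finset.sum_eq_zero fun y _ => ?_
    by_cases h1 : r x ≠ x ∧ y = r x
    · obtain ⟨h1a, h1b⟩ := h1
      subst h1b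
      have : ¬ (r (r x) ≠ r x ∧ z = r (r x)) := fun h2 => h2.1 (hrr x)
      simp [hF, this]
    · simp [hF, h1]
  have hEunit : IsUnit ((1 - F).det) := by
    have h1 : (1 - F) * (1 + F) = 1 := by
      have : (1 - F) * (1 + F) = 1 - F * F := by noncomm_ring
      rw [this, hF2, sub_zero]
    exact IsUnit.of_mul_eq_one _ (by rw [← Matrix.det_mul, h1, Matrix.det_one])
  set D : Matrix G G ℤ[X] :=
    Matrix.diagonal (fun x => if r x ≠ x then (X + 1 : ℤ[X]) else 1) with hD
  set M : Matrix G G ℤ[X] := fun x z =>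
    if r x ≠ x then ((if x = z then 1 else 0) - (if r x = z then 1 else 0) : ℤ[X])
    else C0 x z with hM
  have hmain : (1 - F) * C0 = D * M := by
    refine Matrix.ext fun x z => ?_
    have hFC : (F * C0) x z = if r x ≠ x then C0 (r x) z else 0 := by
      rw [Matrix.mul_apply]
      by_cases hx : r x ≠ x
      · rw [if_pos hx]
        rw [Finset.sum_eq_single (r x)]
        · simp [hF, hx]
        · intro y _ hy; simp [hF, hy]
        · intro h; exact absurd (mem_univ _) h
      · rw [if_neg hx]
        refine Finset.sum_eq_zero fun y _ => ?_
        simp [hF, hx]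
    have hlhs : ((1 - F) * C0) x z = C0 x z - (F * C0) x z := by
      rw [sub_mul, one_mul, Matrix.sub_apply]
    have hrhs : (D * M) x z = (if r x ≠ x then (X + 1 : ℤ[X]) else 1) * M x z := by
      rw [hD, Matrix.diagonal_mul]
    rw [hlhs, hrhs, hFC]
    by_cases hx : r x ≠ x
    · rw [if_pos hx, if_pos hx]; simp only [hM]
      rw [if_pos hx]
      rw [hC0]
      by_cases hzx : z = x
      · subst hzx
        rw [Matrix.charmatrix_apply_eq, Matrix.charmatrix_apply_ne _ _ _ hx,
          hAxx, hAdjr _ hx]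
        rw [if_pos rfl, if_neg hx, map_zero, map_one]
        ring
      · by_cases hzrx : z = r x
        · subst hzrx
          rw [Matrix.charmatrix_apply_ne _ _ _ (fun h => hzx h.symm),
            Matrix.charmatrix_apply_eq, hAdjr' _ hx, hAxx]
          rw [if_neg (fun h => hzx h.symm), if_pos rfl, map_zero, map_one]
          ring
        · rw [Matrix.charmatrix_apply_ne _ _ _ (fun h => hzx h.symm),
            Matrix.charmatrix_apply_ne _ _ _ (fun h => hzrx h.symm),
            htwin x z hzx hzrx]
          rw [if_neg (fun h => hzx h.symm), if_neg (fun h => hzrx h.symm)]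
          ring
    · rw [if_neg hx, if_neg hx]; simp only [hM]; rw [if_neg hx, one_mul, sub_zero]
  have hdetD : D.det = ((X : ℤ[X]) + 1) ^ (univ.filter fun x : G => r x ≠ x).card := by
    rw [hD, Matrix.det_diagonal]
    rw [← Finset.prod_filter_mul_prod_filter_not univ (fun x => r x ≠ x)]
    have h1 : ∏ x ∈ univ.filter (fun x => r x ≠ x),
        (if r x ≠ x then (X + 1 : ℤ[X]) else 1) = ((X : ℤ[X]) + 1) ^ (univ.filter fun x : G => r x ≠ x).card := by
      rw [Finset.prod_congr rfl (fun x hx => if_pos (mem_filter.mp hx).2), Finset.prod_const]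
    have h2 : ∏ x ∈ univ.filter (fun x => ¬ r x ≠ x),
        (if r x ≠ x then (X + 1 : ℤ[X]) else 1) = 1 := by
      rw [Finset.prod_congr rfl (fun x hx => if_neg (mem_filter.mp hx).2)]
      exact Finset.prod_const_one
    rw [h1, h2, mul_one]
  have hdet : (1 - F).det * Matrix.charpoly A =
      ((X : ℤ[X]) + 1) ^ (univ.filter fun x : G => r x ≠ x).card * M.det := by
    rw [Matrix.charpoly, ← hC0, ← Matrix.det_mul, hmain, Matrix.det_mul, hdetD]
  obtain ⟨u, hu⟩ := hEunit.exists_left_inv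
  refine ⟨u * M.det, ?_⟩
  calc Matrix.charpoly A = (u * (1 - F).det) * Matrix.charpoly A := by rw [hu, one_mul]
    _ = u * ((1 - F).det * Matrix.charpoly A) := by ring
    _ = _ := by rw [hdet]; ring

open AddSubgroup in
theorem zmult_cyclic {G : Type*} [AddCommGroup G] (x : G) :
    IsAddCyclic ↥(zmultiples x) := by
  refine ⟨⟨x, mem_zmultiples x⟩, fun y => ?_⟩
  obtain ⟨y, hy⟩ := y
  obtain ⟨k, hk⟩ := mem_zmultiples_iff.mp hy
  exact mem_zmultiples_iff.mpr ⟨k, Subtype.ext (by simpa using hk)⟩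

open Finset AddSubgroup in
open Classical in
theorem card_sameZmult {G : Type*} [AddCommGroup G] [Fintype G] [DecidableEq G] (x : G) :
    (univ.filter fun y : G => zmultiples y = zmultiples x).card = (addOrderOf x).totient := by
  classical
  haveI := zmult_cyclic x
  have hcard : Fintype.card ↥(zmultiples x) = addOrderOf x := by
    rw [← Nat.card_eq_fintype_card, Nat.card_zmultiples]
  have htot := IsAddCyclic.card_addOrderOf_eq_totient (α := ↥(zmultiples x))
    (d := addOrderOf x) (by rw [hcard])
  rw [← htot]
  refine (Finset.card_bij (fun (a : ↥(zmultiples x)) _ => (a : G)) ?_ ?_ ?_).symm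
  · intro a ha
    have haord : addOrderOf (a : G) = addOrderOf x := by
      rw [AddSubgroup.addOrderOf_coe]
      simpa using (Finset.mem_filter.mp ha).2
    have h1 : zmultiples ((a : G)) ≤ zmultiples x := zmultiples_le_of_mem a.2
    have h2 : zmultiples ((a : G)) = zmultiples x := by
      refine AddSubgroup.eq_of_le_of_card_ge h1 ?_
      rw [Nat.card_zmultiples, Nat.card_zmultiples, haord]
    simp [h2]
  · intro a _ b _ hab
    exact Subtype.ext hab
  · intro b hb
    have hb' : zmultiples b = zmultiples x := by simpa using (Finset.mem_filter.mp hb).2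
    have hbx : b ∈ zmultiples x := hb' ▸ mem_zmultiples b
    refine ⟨⟨b, hbx⟩, ?_, rfl⟩
    have : addOrderOf b = addOrderOf x := by
      rw [← Nat.card_zmultiples, ← Nat.card_zmultiples, hb']
    simp [AddSubgroup.addOrderOf_mk, this]


open Finset AddSubgroup

/-- For a prime `p` dividing `n`, `(X + 1) ^ α` divides the characteristic polynomial of
the adjacency matrix of the power graph of `Z_p × Z_n`, where
`α = p Σ_{d ∣ n, p² ∣ d} (φ(d)-1) + (p+1) Σ_{d ∣ n, p ∣ d, p² ∤ d} (φ(d)-1)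
  + Σ_{d ∣ n, p ∤ d} (φ(d)-1)`. -/
theorem charpoly_power_graph_Zp_Zn (p n : ℕ) (hp : p.Prime) [NeZero n] (hpn : p ∣ n) :
    letI : NeZero p := ⟨hp.ne_zero⟩
    ((X : Polynomial ℤ) + 1) ^
        (p * ∑ d ∈ n.divisors.filter (fun d => p ^ 2 ∣ d), (Nat.totient d - 1) +
         (p + 1) * ∑ d ∈ n.divisors.filter (fun d => p ∣ d ∧ ¬ p ^ 2 ∣ d), (Nat.totient d - 1) +
         ∑ d ∈ n.divisors.filter (fun d => ¬ p ∣ d), (Nat.totient d - 1)) ∣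
      Matrix.charpoly (adjMat (addPowerGraph (ZMod p × ZMod n))) := by
  haveI : NeZero p := ⟨hp.ne_zero⟩
  classical
  set G := (ZMod p × ZMod n) with hG
  let s : Setoid G := ⟨fun x y => zmultiples x = zmultiples y,
    ⟨fun _ => rfl, Eq.symm, Eq.trans⟩⟩
  let r : G → G := fun x => (Quotient.mk s x).out
  have hP1 : ∀ x, zmultiples (r x) = zmultiples x := fun x => Quotient.mk_out (s := s) x
  have hP2 : ∀ x y : G, zmultiples x = zmultiples y → r x = r y := by
    intro x y h
    show (Quotient.mk s x).out = (Quotient.mk s y).out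
    rw [Quotient.sound (α := G) (s := s) (a := x) (b := y) h]
  refine dvd_trans (pow_dvd_pow _ ?_) (key r hP1 hP2)
  -- counting
  haveI : Fintype (Quotient s) := Fintype.ofFinite _
  let qord : Quotient s → ℕ := fun q => addOrderOf q.out
  have horder_eq : ∀ x : G, qord (Quotient.mk s x) = addOrderOf x := by
    intro x
    show addOrderOf (Quotient.mk s x).out = addOrderOf x
    have h : zmultiples ((Quotient.mk s x).out) = zmultiples x := Quotient.mk_out (s := s) x
    rw [← Nat.card_zmultiples, ← Nat.card_zmultiples (a := x), h]
  have ha_dvd_p : ∀ a : ZMod p, addOrderOf a ∣ p := by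
    intro a
    have := addOrderOf_dvd_card (x := a)
    rwa [ZMod.card] at this
  have hb_dvd_n : ∀ b : ZMod n, addOrderOf b ∣ n := by
    intro b
    have := addOrderOf_dvd_card (x := b)
    rwa [ZMod.card] at this
  have hdvd_n : ∀ x : G, addOrderOf x ∣ n := by
    intro x
    rw [Prod.addOrderOf]
    exact Nat.lcm_dvd (dvd_trans (ha_dvd_p x.1) hpn) (hb_dvd_n x.2)
  have hclass : ∀ q : Quotient s,
      (univ.filter fun y : G => Quotient.mk s y = q).card = (qord q).totient := by
    intro q
    have he : (univ.filter fun y : G => Quotient.mk s y = q)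
        = (univ.filter fun y : G => zmultiples y = zmultiples q.out) := by
      ext y
      simp only [mem_filter, mem_univ, true_and]
      conv_lhs => rw [← Quotient.out_eq (s := s) q]
      exact Quotient.eq (r := s)
    rw [he]
    exact card_sameZmult q.out
  have hm : (univ.filter fun x : G => r x ≠ x).card
      = ∑ q : Quotient s, ((qord q).totient - 1) := by
    rw [Finset.card_eq_sum_card_fiberwise (f := Quotient.mk s) (t := univ)
      (fun x _ => mem_univ _)]
    refine Finset.sum_congr rfl fun q _ => ?_
    have hfib : (univ.filter fun x : G => r x ≠ x).filter (fun x => Quotient.mk s x = q)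
        = (univ.filter fun y : G => Quotient.mk s y = q).erase q.out := by
      ext y
      simp only [mem_filter, mem_erase, mem_univ, true_and, filter_filter]
      constructor
      · rintro ⟨h1, h2⟩
        refine ⟨fun hy => h1 ?_, h2⟩
        rw [hy]
        show (Quotient.mk s q.out).out = q.out
        rw [Quotient.out_eq]
      · rintro ⟨h1, h2⟩
        refine ⟨fun hr => h1 ?_, h2⟩
        rw [← hr]
        show (Quotient.mk s y).out = q.out
        rw [h2]
    rw [hfib, Finset.card_erase_of_mem, hclass q]
    simp only [mem_filter, mem_univ, true_and]
    exact Quotient.out_eq q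
  let k : ℕ → ℕ := fun d => (univ.filter fun q : Quotient s => qord q = d).card
  have hsum : ∑ q : Quotient s, ((qord q).totient - 1)
      = ∑ d ∈ n.divisors, k d * (d.totient - 1) := by
    rw [← Finset.sum_fiberwise_of_maps_to (g := qord) (t := n.divisors)
      (fun q _ => Nat.mem_divisors.mpr ⟨hdvd_n q.out, NeZero.ne n⟩)
      (fun q => (qord q).totient - 1)]
    refine sum_congr rfl fun d _ => ?_
    rw [Finset.sum_congr rfl (fun q hq => by rw [(mem_filter.mp hq).2]),
      sum_const, smul_eq_mul]
  have hN : ∀ d ∈ n.divisors,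
      (univ.filter fun x : G => addOrderOf x = d).card = k d * d.totient := by
    intro d hd
    rw [Finset.card_eq_sum_card_fiberwise (f := Quotient.mk s)
      (t := univ.filter fun q : Quotient s => qord q = d)
      (fun x hx => by
        simp only [mem_coe, mem_filter, mem_univ, true_and] at hx ⊢
        rw [horder_eq x, hx])]
    rw [Finset.sum_congr rfl (fun q hq => ?_), sum_const, smul_eq_mul]
    have hqd : qord q = d := (mem_filter.mp hq).2
    have hfe : (univ.filter fun x : G => addOrderOf x = d).filter
        (fun x => Quotient.mk s x = q) = univ.filter fun y : G => Quotient.mk s y = q := by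
      ext y
      simp only [mem_filter, mem_univ, true_and, filter_filter]
      constructor
      · rintro ⟨-, h2⟩; exact h2
      · intro h2
        refine ⟨?_, h2⟩
        rw [← horder_eq y, h2, hqd]
    rw [hfe, hclass q, hqd]
  have hB : ∀ e, e ∣ n → (univ.filter fun b : ZMod n => addOrderOf b = e).card
      = e.totient := by
    intro e he
    exact IsAddCyclic.card_addOrderOf_eq_totient (α := ZMod n) (d := e)
      (by rw [ZMod.card]; exact he)
  have hk : ∀ d ∈ n.divisors,
      (if p ^ 2 ∣ d then p else if p ∣ d then p + 1 else 1) ≤ k d := by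
    intro d hd
    obtain ⟨hdn, -⟩ := Nat.mem_divisors.mp hd
    have hd0 : 0 < d := Nat.pos_of_mem_divisors hd
    have htot0 : 0 < d.totient := Nat.totient_pos.mpr hd0
    have hNle : (if p ^ 2 ∣ d then p else if p ∣ d then p + 1 else 1) * d.totient
        ≤ (univ.filter fun x : G => addOrderOf x = d).card := by
      have hT1sub : ∀ hpd : p ∣ d,
          ((univ : Finset (ZMod p)) ×ˢ (univ.filter fun b : ZMod n => addOrderOf b = d))
          ⊆ (univ.filter fun x : G => addOrderOf x = d) := by
        intro hpd x hx
        rw [Finset.mem_product] at hx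
        have hb : addOrderOf x.2 = d := by simpa using hx.2
        simp only [mem_filter, mem_univ, true_and]
        rw [Prod.addOrderOf, hb]
        exact Nat.dvd_antisymm
          (Nat.lcm_dvd (dvd_trans (ha_dvd_p x.1) hpd) dvd_rfl) (Nat.dvd_lcm_right _ _)
      have hT1card : ((univ : Finset (ZMod p)) ×ˢ
          (univ.filter fun b : ZMod n => addOrderOf b = d)).card = p * d.totient := by
        rw [Finset.card_product, card_univ, ZMod.card, hB d hdn]
      by_cases h2 : p ^ 2 ∣ d
      · rw [if_pos h2]
        rw [← hT1card]
        exact Finset.card_le_card (hT1sub (dvd_trans (dvd_pow_self p two_ne_zero) h2))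
      · rw [if_neg h2]
        by_cases h1 : p ∣ d
        · rw [if_pos h1]
          have hndp : ¬ p ∣ d / p := by
            intro h
            exact h2 (by rw [pow_two]; exact (Nat.dvd_div_iff_mul_dvd h1).mp h)
          have hdpn : d / p ∣ n := dvd_trans (Nat.div_dvd_of_dvd h1) hdn
          have hcop : Nat.Coprime p (d / p) := (Nat.Prime.coprime_iff_not_dvd hp).mpr hndp
          have hdp_eq : p * (d / p) = d := Nat.mul_div_cancel' h1
          have htotd : d.totient = (p - 1) * (d / p).totient := by
            conv_lhs => rw [← hdp_eq]
            rw [Nat.totient_mul hcop, Nat.totient_prime hp]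
          set T1 := (univ : Finset (ZMod p)) ×ˢ
            (univ.filter fun b : ZMod n => addOrderOf b = d) with hT1
          set T2 := (univ.filter fun a : ZMod p => a ≠ 0) ×ˢ
            (univ.filter fun b : ZMod n => addOrderOf b = d / p) with hT2
          have hT2sub : T2 ⊆ (univ.filter fun x : G => addOrderOf x = d) := by
            intro x hx
            rw [hT2, Finset.mem_product] at hx
            obtain ⟨hxa, hxb⟩ := hx
            have ha0 : x.1 ≠ 0 := by simpa using hxa
            have hb : addOrderOf x.2 = d / p := by simpa using hxb
            have hap : addOrderOf x.1 = p := by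
              rcases (Nat.Prime.eq_one_or_self_of_dvd hp _ (ha_dvd_p x.1)) with h | h
              · exact absurd (AddMonoid.addOrderOf_eq_one_iff.mp h) ha0
              · exact h
            simp only [mem_filter, mem_univ, true_and]
            rw [Prod.addOrderOf, hap, hb, Nat.Coprime.lcm_eq_mul hcop, hdp_eq]
          have hdisj : Disjoint T1 T2 := by
            rw [Finset.disjoint_left]
            intro x hx1 hx2
            rw [hT1, Finset.mem_product] at hx1
            rw [hT2, Finset.mem_product] at hx2
            have h1' : addOrderOf x.2 = d := by simpa using hx1.2
            have h2' : addOrderOf x.2 = d / p := by simpa using hx2.2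
            have : d / p < d := Nat.div_lt_self hd0 hp.one_lt
            omega
          have hT2card : T2.card = (p - 1) * (d / p).totient := by
            rw [hT2, Finset.card_product, hB _ hdpn]
            congr 1
            rw [Finset.filter_ne', Finset.card_erase_of_mem (mem_univ _),
              card_univ, ZMod.card]
          have hle : T1.card + T2.card
              ≤ (univ.filter fun x : G => addOrderOf x = d).card := by
            rw [← Finset.card_union_of_disjoint hdisj]
            exact Finset.card_le_card (Finset.union_subset (hT1sub h1) hT2sub)
          have heq : (p + 1) * d.totient
              = p * d.totient + (p - 1) * (d / p).totient := by
            rw [← htotd]; ring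
          rw [heq, ← hT1card, ← hT2card]
          exact hle
        · rw [if_neg h1, one_mul]
          have : (univ.filter fun b : ZMod n => addOrderOf b = d).card
              ≤ (univ.filter fun x : G => addOrderOf x = d).card := by
            refine Finset.card_le_card_of_injOn (fun b => ((0 : ZMod p), b)) ?_ ?_
            · intro b hb
              simp only [mem_coe, mem_filter, mem_univ, true_and] at hb ⊢
              rw [Prod.addOrderOf]
              show Nat.lcm (addOrderOf (0 : ZMod p)) (addOrderOf b) = d
              rw [addOrderOf_zero, Nat.lcm_one_left, hb]
            · intro b1 _ b2 _ h
              exact (Prod.mk.injEq _ _ _ _ ▸ h).2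
          rw [← hB d hdn]
          exact this
    rw [hN d hd] at hNle
    exact Nat.le_of_mul_le_mul_right hNle htot0
  have hpart : ∀ f : ℕ → ℕ, ∑ d ∈ n.divisors, f d
      = ∑ d ∈ n.divisors.filter (fun d => p ^ 2 ∣ d), f d
      + ∑ d ∈ n.divisors.filter (fun d => p ∣ d ∧ ¬ p ^ 2 ∣ d), f d
      + ∑ d ∈ n.divisors.filter (fun d => ¬ p ∣ d), f d := by
    intro f
    have e1 : (n.divisors.filter (fun d => p ∣ d)).filter (fun d => p ^ 2 ∣ d)
        = n.divisors.filter (fun d => p ^ 2 ∣ d) := by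
      ext d
      simp only [Finset.mem_filter]
      have himp : p ^ 2 ∣ d → p ∣ d := fun h => dvd_trans (dvd_pow_self p two_ne_zero) h
      tauto
    have e2 : (n.divisors.filter (fun d => p ∣ d)).filter (fun d => ¬ p ^ 2 ∣ d)
        = n.divisors.filter (fun d => p ∣ d ∧ ¬ p ^ 2 ∣ d) := by
      ext d
      simp only [Finset.mem_filter]
      tauto
    rw [← Finset.sum_filter_add_sum_filter_not n.divisors (fun d => p ∣ d) f,
      ← Finset.sum_filter_add_sum_filter_not (n.divisors.filter (fun d => p ∣ d))
        (fun d => p ^ 2 ∣ d) f, e1, e2]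
  rw [hm, hsum, hpart (fun d => k d * (d.totient - 1))]
  have h1 : p * ∑ d ∈ n.divisors.filter (fun d => p ^ 2 ∣ d), (d.totient - 1)
      ≤ ∑ d ∈ n.divisors.filter (fun d => p ^ 2 ∣ d), k d * (d.totient - 1) := by
    rw [Finset.mul_sum]
    refine Finset.sum_le_sum fun d hd => ?_
    have hmem := Finset.mem_filter.mp hd
    have hkd := hk d hmem.1
    rw [if_pos hmem.2] at hkd
    exact Nat.mul_le_mul_right _ hkd
  have h2 : (p + 1) * ∑ d ∈ n.divisors.filter (fun d => p ∣ d ∧ ¬ p ^ 2 ∣ d), (d.totient - 1)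
      ≤ ∑ d ∈ n.divisors.filter (fun d => p ∣ d ∧ ¬ p ^ 2 ∣ d), k d * (d.totient - 1) := by
    rw [Finset.mul_sum]
    refine Finset.sum_le_sum fun d hd => ?_
    have hmem := Finset.mem_filter.mp hd
    have hkd := hk d hmem.1
    rw [if_neg hmem.2.2, if_pos hmem.2.1] at hkd
    exact Nat.mul_le_mul_right _ hkd
  have h3 : ∑ d ∈ n.divisors.filter (fun d => ¬ p ∣ d), (d.totient - 1)
      ≤ ∑ d ∈ n.divisors.filter (fun d => ¬ p ∣ d), k d * (d.totient - 1) := by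
    refine Finset.sum_le_sum fun d hd => ?_
    have hmem := Finset.mem_filter.mp hd
    have hkd := hk d hmem.1
    rw [if_neg (fun h => hmem.2 (dvd_trans (dvd_pow_self p two_ne_zero) h)),
      if_neg hmem.2] at hkd
    have := Nat.mul_le_mul_right (d.totient - 1) hkd
    simpa using this
  exact add_le_add (add_le_add h1 h2) h3
end

section
/- Let p be a prime with p² dividing the positive integer n, and let d be a divisor of n. Then the number of cyclic subgroups of Z_{p²} × Z_n of order d equals: p², if p³ divides d; p² + p, if p² divides d but p³ does not; p + 1, if p divides d but p² does not; and 1, if p does not divide d. -/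
open Polynomial

open AddSubgroup in
lemma genCount (G : Type*) [AddGroup G] [Fintype G] (d : ℕ) :
    numCyclicSubgroups G d * d.totient = Nat.card {x : G // addOrderOf x = d} := by
  classical
  set f : {x : G // addOrderOf x = d} → {H : AddSubgroup G // IsAddCyclic H ∧ Nat.card H = d} :=
    fun x => ⟨zmultiples x.1, ⟨⟨⟨x.1, mem_zmultiples _⟩, fun y => by
      obtain ⟨k, hk⟩ := y.2
      exact ⟨k, Subtype.ext (by simpa using hk)⟩⟩⟩, by
        rw [Nat.card_zmultiples]; exact x.2⟩ with hf
  have hfib : ∀ H, Nat.card {x // f x = H} = d.totient := by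
    rintro ⟨H, hcyc, hcard⟩
    have he : {x // f x = (⟨H, hcyc, hcard⟩ : {H : AddSubgroup G // IsAddCyclic H ∧ Nat.card H = d})}
        ≃ {y : H // addOrderOf y = d} := by
      refine ⟨fun x => ⟨⟨x.1.1, by
            have h : zmultiples x.1.1 = H := congrArg Subtype.val x.2
            exact (SetLike.ext_iff.mp h x.1.1).mp (mem_zmultiples x.1.1)⟩,
          by rw [AddSubgroup.addOrderOf_mk]; exact x.1.2⟩,
        fun y => ⟨⟨y.1.1, by rw [addOrderOf_coe]; exact y.2⟩, ?_⟩, fun x => rfl, fun y => rfl⟩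
      · apply Subtype.ext
        simp only [hf]
        refine eq_of_le_of_card_ge (zmultiples_le_of_mem y.1.2) ?_
        rw [hcard, Nat.card_zmultiples, addOrderOf_coe]
        exact le_of_eq y.2.symm
    rw [Nat.card_congr he]
    haveI : Fintype H := Fintype.ofFinite H
    haveI : IsAddCyclic H := hcyc
    rw [Nat.card_eq_fintype_card, Fintype.card_subtype]
    exact IsAddCyclic.card_addOrderOf_eq_totient (by rw [← Nat.card_eq_fintype_card, hcard])
  have hsig := Nat.card_congr (Equiv.sigmaFiberEquiv f).symm
  rw [hsig, Nat.card_eq_fintype_card, Fintype.card_sigma]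
  have : ∀ H, Fintype.card {x // f x = H} = d.totient := by
    intro H; rw [← Nat.card_eq_fintype_card]; exact hfib H
  simp only [this, Finset.sum_const, Finset.card_univ, smul_eq_mul]
  rw [numCyclicSubgroups, Nat.card_eq_fintype_card]

open Finset in
lemma cycDvdCount {C : Type*} [AddGroup C] [Fintype C] [IsAddCyclic C] {g : ℕ}
    (hg : g ∣ Fintype.card C) (hg0 : g ≠ 0) :
    Nat.card {x : C // addOrderOf x ∣ g} = g := by
  classical
  rw [Nat.card_eq_fintype_card, Fintype.card_subtype]
  have key : (Finset.univ.filter (fun x : C => addOrderOf x ∣ g)).card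
      = ∑ e ∈ g.divisors, ((Finset.univ.filter (fun x : C => addOrderOf x ∣ g)).filter
          (fun x => addOrderOf x = e)).card := by
    apply Finset.card_eq_sum_card_fiberwise (f := fun x => addOrderOf x)
    intro x hx
    rw [Finset.mem_coe, Finset.mem_filter] at hx
    exact Nat.mem_divisors.mpr ⟨hx.2, hg0⟩
  rw [key]
  have step : ∀ e ∈ g.divisors, ((Finset.univ.filter (fun x : C => addOrderOf x ∣ g)).filter
      (fun x => addOrderOf x = e)).card = e.totient := by
    intro e he
    rw [Finset.filter_filter]
    have h1 : ∀ x ∈ (Finset.univ : Finset C),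
        (addOrderOf x ∣ g ∧ addOrderOf x = e) ↔ addOrderOf x = e := fun x _ =>
      ⟨And.right, fun h => ⟨h ▸ (Nat.mem_divisors.mp he).1, h⟩⟩
    rw [Finset.filter_congr h1]
    exact IsAddCyclic.card_addOrderOf_eq_totient (dvd_trans (Nat.mem_divisors.mp he).1 hg)
  rw [Finset.sum_congr rfl step, Nat.sum_totient]

lemma cycEqCount {C : Type*} [AddGroup C] [Fintype C] [IsAddCyclic C] {e : ℕ}
    (he : e ∣ Fintype.card C) :
    Nat.card {x : C // addOrderOf x = e} = e.totient := by
  classical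
  rw [Nat.card_eq_fintype_card, Fintype.card_subtype]
  exact IsAddCyclic.card_addOrderOf_eq_totient he

lemma prodEqCount {A B : Type*} [AddGroup A] [AddGroup B] [Fintype A] [Fintype B]
    (hco : Nat.Coprime (Fintype.card A) (Fintype.card B)) {d₁ d₂ : ℕ}
    (h₁ : d₁ ∣ Fintype.card A) (h₂ : d₂ ∣ Fintype.card B) :
    Nat.card {x : A × B // addOrderOf x = d₁ * d₂}
      = Nat.card {a : A // addOrderOf a = d₁} * Nat.card {b : B // addOrderOf b = d₂} := by
  have hiff : ∀ x : A × B, addOrderOf x = d₁ * d₂ ↔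
      (addOrderOf x.1 = d₁ ∧ addOrderOf x.2 = d₂) := by
    rintro ⟨a, b⟩
    constructor
    · intro h
      rw [Prod.addOrderOf] at h
      have ha : addOrderOf a ∣ Fintype.card A := addOrderOf_dvd_card
      have hb : addOrderOf b ∣ Fintype.card B := addOrderOf_dvd_card
      have hab : Nat.Coprime (addOrderOf a) (addOrderOf b) :=
        Nat.Coprime.coprime_dvd_right hb (Nat.Coprime.coprime_dvd_left ha hco)
      rw [Nat.Coprime.lcm_eq_mul hab] at h
      have hoa : addOrderOf a ∣ d₁ := by
        refine (Nat.Coprime.dvd_of_dvd_mul_right ?_ (h ▸ Dvd.intro _ rfl))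
        exact Nat.Coprime.coprime_dvd_right h₂ (Nat.Coprime.coprime_dvd_left ha hco)
      have hob : addOrderOf b ∣ d₂ := by
        refine (Nat.Coprime.dvd_of_dvd_mul_left ?_ (h ▸ Dvd.intro_left _ rfl))
        exact Nat.Coprime.coprime_dvd_right h₁ (Nat.Coprime.coprime_dvd_left hb hco.symm)
      obtain ⟨u, hu⟩ := hoa
      obtain ⟨v, hv⟩ := hob
      have hpos : 0 < addOrderOf a * addOrderOf b :=
        Nat.mul_pos (addOrderOf_pos a) (addOrderOf_pos b)
      have huv : u * v = 1 := by
        have : (addOrderOf a * addOrderOf b) * (u * v)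
            = (addOrderOf a * addOrderOf b) * 1 := by
          rw [mul_one]; rw [hu, hv] at h; linarith [h.symm]
        exact Nat.eq_of_mul_eq_mul_left hpos this
      have hu1 := Nat.eq_one_of_mul_eq_one_right huv
      have hv1 := Nat.eq_one_of_mul_eq_one_left huv
      constructor
      · simp [hu, hu1]
      · simp [hv, hv1]
    · rintro ⟨ha, hb⟩
      rw [Prod.addOrderOf]
      simp only [ha, hb]
      exact Nat.Coprime.lcm_eq_mul
        (Nat.Coprime.coprime_dvd_right h₂ (Nat.Coprime.coprime_dvd_left h₁ hco))
  rw [Nat.card_congr ((Equiv.subtypeEquivRight hiff).trans (Equiv.subtypeProdEquivProd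
      (p := fun a : A => addOrderOf a = d₁) (q := fun b : B => addOrderOf b = d₂))),
    Nat.card_prod]

lemma prodDvdCount {A B : Type*} [AddGroup A] [AddGroup B] [Fintype A] [Fintype B] (M : ℕ) :
    Nat.card {x : A × B // addOrderOf x ∣ M}
      = Nat.card {a : A // addOrderOf a ∣ M} * Nat.card {b : B // addOrderOf b ∣ M} := by
  have hiff : ∀ x : A × B, addOrderOf x ∣ M ↔
      (addOrderOf x.1 ∣ M ∧ addOrderOf x.2 ∣ M) := by
    rintro ⟨a, b⟩
    rw [Prod.addOrderOf, Nat.lcm_dvd_iff]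
  rw [Nat.card_congr ((Equiv.subtypeEquivRight hiff).trans (Equiv.subtypeProdEquivProd
      (p := fun a : A => addOrderOf a ∣ M) (q := fun b : B => addOrderOf b ∣ M))),
    Nat.card_prod]

lemma zmodDvdCount (N : ℕ) [NeZero N] (M : ℕ) (hM : M ≠ 0) :
    Nat.card {x : ZMod N // addOrderOf x ∣ M} = Nat.gcd N M := by
  have hiff : ∀ x : ZMod N, addOrderOf x ∣ M ↔ addOrderOf x ∣ Nat.gcd N M := by
    intro x
    constructor
    · intro h
      refine Nat.dvd_gcd ?_ h
      have := addOrderOf_dvd_card (x := x)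
      rwa [ZMod.card] at this
    · intro h
      exact h.trans (Nat.gcd_dvd_right N M)
  rw [Nat.card_congr (Equiv.subtypeEquivRight hiff)]
  exact cycDvdCount (by rw [ZMod.card]; exact Nat.gcd_dvd_left N M)
    (Nat.gcd_ne_zero_right hM)

lemma primePowExactCount {G : Type*} [AddGroup G] [Fintype G] {p : ℕ} (hp : p.Prime) (k : ℕ) :
    Nat.card {x : G // addOrderOf x = p ^ (k + 1)}
      = Nat.card {x : G // addOrderOf x ∣ p ^ (k + 1)}
        - Nat.card {x : G // addOrderOf x ∣ p ^ k} := by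
  classical
  rw [Nat.card_eq_fintype_card, Nat.card_eq_fintype_card, Nat.card_eq_fintype_card,
    Fintype.card_subtype, Fintype.card_subtype, Fintype.card_subtype]
  have hss : Finset.univ.filter (fun x : G => addOrderOf x ∣ p ^ k)
      ⊆ Finset.univ.filter (fun x : G => addOrderOf x ∣ p ^ (k + 1)) := by
    intro x hx
    rw [Finset.mem_filter] at hx ⊢
    exact ⟨hx.1, hx.2.trans (pow_dvd_pow p (Nat.le_succ k))⟩
  have heq : Finset.univ.filter (fun x : G => addOrderOf x = p ^ (k + 1))
      = Finset.univ.filter (fun x : G => addOrderOf x ∣ p ^ (k + 1))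
        \ Finset.univ.filter (fun x : G => addOrderOf x ∣ p ^ k) := by
    ext x
    simp only [Finset.mem_filter, Finset.mem_sdiff, Finset.mem_univ, true_and]
    constructor
    · intro h
      refine ⟨h ▸ dvd_rfl, ?_⟩
      rw [h]
      intro hc
      have h1 := Nat.le_of_dvd (pow_pos hp.pos k) hc
      have h2 := Nat.pow_lt_pow_right hp.one_lt (Nat.lt_succ_self k)
      simp only [Nat.succ_eq_add_one] at h1 h2
      omega
    · rintro ⟨h1, h2⟩
      obtain ⟨j, hj, hje⟩ := (Nat.dvd_prime_pow hp).mp h1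
      rcases Nat.lt_or_ge j (k + 1) with hj' | hj'
      · exact absurd (hje ▸ pow_dvd_pow p (Nat.lt_succ_iff.mp hj')) h2
      · rw [hje, Nat.le_antisymm hj hj']
  rw [heq, Finset.card_sdiff_of_subset hss]

lemma gcd_pow_pow {p : ℕ} (a b : ℕ) : Nat.gcd (p ^ a) (p ^ b) = p ^ min a b := by
  rcases le_total a b with h | h
  · rw [min_eq_left h, Nat.gcd_eq_left (pow_dvd_pow p h)]
  · rw [min_eq_right h, Nat.gcd_eq_right (pow_dvd_pow p h)]

lemma NACount {p : ℕ} (hp : p.Prime) (a b k : ℕ) :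
    Nat.card {x : ZMod (p ^ a) × ZMod (p ^ b) // addOrderOf x = p ^ (k + 1)}
      = p ^ min (k + 1) a * p ^ min (k + 1) b - p ^ min k a * p ^ min k b := by
  haveI : NeZero (p ^ a) := ⟨pow_ne_zero a hp.ne_zero⟩
  haveI : NeZero (p ^ b) := ⟨pow_ne_zero b hp.ne_zero⟩
  rw [primePowExactCount hp k, prodDvdCount, prodDvdCount,
    zmodDvdCount _ _ (pow_ne_zero _ hp.ne_zero), zmodDvdCount _ _ (pow_ne_zero _ hp.ne_zero),
    zmodDvdCount _ _ (pow_ne_zero _ hp.ne_zero), zmodDvdCount _ _ (pow_ne_zero _ hp.ne_zero),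
    gcd_pow_pow, gcd_pow_pow, gcd_pow_pow, gcd_pow_pow, min_comm a, min_comm a,
    min_comm b, min_comm b]

/-- For a prime `p` with `p² ∣ n` and a divisor `d` of `n`, the number of cyclic
subgroups of `Z_{p²} × Z_n` of order `d` is `p²` if `p³ ∣ d`, `p² + p` if `p² ∣ d` and
`p³ ∤ d`, `p + 1` if `p ∣ d` and `p² ∤ d`, and `1` if `p ∤ d`. -/
theorem num_cyclic_subgroups_Zp2_Zn (p n : ℕ) (hp : p.Prime) [NeZero n]
    (hpn : p ^ 2 ∣ n) (d : ℕ) (hd : d ∣ n) :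
    (p ^ 3 ∣ d → numCyclicSubgroups (ZMod (p ^ 2) × ZMod n) d = p ^ 2) ∧
    (p ^ 2 ∣ d → ¬ p ^ 3 ∣ d → numCyclicSubgroups (ZMod (p ^ 2) × ZMod n) d = p ^ 2 + p) ∧
    (p ∣ d → ¬ p ^ 2 ∣ d → numCyclicSubgroups (ZMod (p ^ 2) × ZMod n) d = p + 1) ∧
    (¬ p ∣ d → numCyclicSubgroups (ZMod (p ^ 2) × ZMod n) d = 1) := by
  have hn0 : n ≠ 0 := NeZero.ne n
  have hd0 : d ≠ 0 := fun h => hn0 (Nat.eq_zero_of_zero_dvd (h ▸ hd))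
  set v := n.factorization p with hv
  set m := n / p ^ v with hm
  set k := d.factorization p with hk
  set m' := d / p ^ k with hm'
  have hnvm : p ^ v * m = n := Nat.ordProj_mul_ordCompl_eq_self n p
  have hdkm : p ^ k * m' = d := Nat.ordProj_mul_ordCompl_eq_self d p
  have hpm : ¬ p ∣ m := Nat.not_dvd_ordCompl hp hn0
  have hpm' : ¬ p ∣ m' := Nat.not_dvd_ordCompl hp hd0
  have hm0 : m ≠ 0 := by intro h; rw [h, mul_zero] at hnvm; exact hn0 hnvm.symm
  have hm'0 : m' ≠ 0 := by intro h; rw [h, mul_zero] at hdkm; exact hd0 hdkm.symm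
  have hv2 : 2 ≤ v := (hp.pow_dvd_iff_le_factorization hn0).mp hpn
  have hkv : k ≤ v := by
    have h1 := (Nat.factorization_le_iff_dvd hd0 hn0).mpr hd
    exact Finsupp.le_def.mp h1 p
  have hcop : Nat.Coprime p m := (Nat.Prime.coprime_iff_not_dvd hp).mpr hpm
  have hcop' : Nat.Coprime p m' := (Nat.Prime.coprime_iff_not_dvd hp).mpr hpm'
  have hm'm : m' ∣ m := by
    have h1 : m' ∣ m * p ^ v := by
      rw [mul_comm, hnvm]
      exact (Nat.ordCompl_dvd d p).trans hd
    exact (Nat.Coprime.pow_right v hcop'.symm).dvd_of_dvd_mul_right h1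
  haveI : NeZero (p ^ 2) := ⟨pow_ne_zero 2 hp.ne_zero⟩
  haveI : NeZero (p ^ v) := ⟨pow_ne_zero v hp.ne_zero⟩
  haveI : NeZero m := ⟨hm0⟩
  have hcopvm : Nat.Coprime (p ^ v) m := Nat.Coprime.pow_left v hcop
  let e₁ : ZMod n ≃+ ZMod (p ^ v) × ZMod m :=
    ((ZMod.ringEquivCongr hnvm.symm).trans (ZMod.chineseRemainder hcopvm)).toAddEquiv
  let e : ZMod (p ^ 2) × ZMod n ≃+ (ZMod (p ^ 2) × ZMod (p ^ v)) × ZMod m :=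
    (AddEquiv.prodCongr (AddEquiv.refl (ZMod (p ^ 2))) e₁).trans
      (AddEquiv.prodAssoc (M := ZMod (p ^ 2)) (N := ZMod (p ^ v)) (P := ZMod m)).symm
  have hNcard : Nat.card {x : ZMod (p ^ 2) × ZMod n // addOrderOf x = d}
      = Nat.card {x : (ZMod (p ^ 2) × ZMod (p ^ v)) × ZMod m // addOrderOf x = d} :=
    Nat.card_congr (e.toEquiv.subtypeEquiv fun x => by
      rw [show e.toEquiv x = e x from rfl, AddEquiv.addOrderOf_eq])
  have hcardA : Fintype.card (ZMod (p ^ 2) × ZMod (p ^ v)) = p ^ (2 + v) := by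
    rw [Fintype.card_prod, ZMod.card, ZMod.card, pow_add]
  have hsplit : Nat.card {x : (ZMod (p ^ 2) × ZMod (p ^ v)) × ZMod m // addOrderOf x = d}
      = Nat.card {a : ZMod (p ^ 2) × ZMod (p ^ v) // addOrderOf a = p ^ k} * m'.totient := by
    rw [← hdkm]
    rw [prodEqCount (by rw [hcardA, ZMod.card]; exact Nat.Coprime.pow_left _ hcop)
      (by rw [hcardA]; exact pow_dvd_pow p (by omega))
      (by rw [ZMod.card]; exact hm'm)]
    congr 1
    exact cycEqCount (by rw [ZMod.card]; exact hm'm)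
  have key0 : numCyclicSubgroups (ZMod (p ^ 2) × ZMod n) d * d.totient
      = Nat.card {a : ZMod (p ^ 2) × ZMod (p ^ v) // addOrderOf a = p ^ k} * m'.totient := by
    rw [genCount, hNcard, hsplit]
  have htot : d.totient = (p ^ k).totient * m'.totient := by
    rw [← hdkm, Nat.totient_mul (Nat.Coprime.pow_left k hcop')]
  have key : numCyclicSubgroups (ZMod (p ^ 2) × ZMod n) d * (p ^ k).totient
      = Nat.card {a : ZMod (p ^ 2) × ZMod (p ^ v) // addOrderOf a = p ^ k} := by
    have hm't : 0 < m'.totient := Nat.totient_pos.mpr (Nat.pos_of_ne_zero hm'0)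
    apply Nat.eq_of_mul_eq_mul_right hm't
    rw [mul_assoc, ← htot, key0]
  have hfinal : ∀ c : ℕ, c * (p ^ k).totient
      = Nat.card {a : ZMod (p ^ 2) × ZMod (p ^ v) // addOrderOf a = p ^ k}
      → numCyclicSubgroups (ZMod (p ^ 2) × ZMod n) d = c := by
    intro c hc
    have hpos : 0 < (p ^ k).totient :=
      Nat.totient_pos.mpr (pow_pos hp.pos k)
    exact Nat.eq_of_mul_eq_mul_right hpos (key.trans hc.symm)
  obtain ⟨q, hq⟩ : ∃ q, p = q + 1 := ⟨p - 1, by have := hp.pos; omega⟩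
  have hdvd_iff : ∀ i : ℕ, p ^ i ∣ d ↔ i ≤ k :=
    fun i => hp.pow_dvd_iff_le_factorization hd0
  refine ⟨?_, ?_, ?_, ?_⟩
  · -- p^3 ∣ d : k ≥ 3
    intro h3
    have hk3 : 3 ≤ k := (hdvd_iff 3).mp h3
    obtain ⟨j, hj, hjk⟩ : ∃ j, 2 ≤ j ∧ k = j + 1 := ⟨k - 1, by omega, by omega⟩
    apply hfinal
    have htotk : (p ^ (j + 1)).totient = p ^ j * (p - 1) := Nat.totient_prime_pow_succ hp j
    have hNA := NACount hp 2 v j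
    rw [min_eq_right (show 2 ≤ j + 1 by omega), min_eq_left (show j + 1 ≤ v by omega),
      min_eq_right (show 2 ≤ j by omega), min_eq_left (show j ≤ v by omega)] at hNA
    rw [hjk, htotk, hNA]
    have hr : p ^ 2 * (p ^ j * (p - 1)) + p ^ 2 * p ^ j = p ^ 2 * p ^ (j + 1) := by
      rw [hq, Nat.add_sub_cancel]; ring
    omega
  · -- k = 2
    intro h2 h3
    have hk2 : k = 2 := by
      have ha := (hdvd_iff 2).mp h2
      have hb : ¬ 3 ≤ k := fun h => h3 ((hdvd_iff 3).mpr h)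
      omega
    apply hfinal
    have htot2 : (p ^ 2).totient = p * (p - 1) := by
      rw [show (2 : ℕ) = 1 + 1 from rfl, Nat.totient_prime_pow_succ hp, pow_one]
    have hNA := NACount hp 2 v 1
    rw [show (1 : ℕ) + 1 = 2 from rfl] at hNA
    rw [min_self, min_eq_left hv2, min_eq_left (show (1 : ℕ) ≤ 2 by omega),
      min_eq_left (show 1 ≤ v by omega), pow_one] at hNA
    rw [hk2, htot2, hNA]
    have hr : (p ^ 2 + p) * (p * (p - 1)) + p * p = p ^ 2 * p ^ 2 := by
      rw [hq, Nat.add_sub_cancel]; ring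
    omega
  · -- k = 1
    intro h1 h2
    have hk1 : k = 1 := by
      have ha := (hdvd_iff 1).mp (by rwa [pow_one])
      have hb : ¬ 2 ≤ k := fun h => h2 ((hdvd_iff 2).mpr h)
      omega
    apply hfinal
    have hNA := NACount hp 2 v 0
    rw [show (0 : ℕ) + 1 = 1 from rfl] at hNA
    rw [min_eq_left (show (1 : ℕ) ≤ 2 by omega), min_eq_left (show 1 ≤ v by omega),
      Nat.zero_min, Nat.zero_min, pow_zero, pow_one, mul_one] at hNA
    rw [hk1, pow_one, Nat.totient_prime hp, hNA]
    have hr : (p + 1) * (p - 1) + 1 = p * p := by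
      rw [hq, Nat.add_sub_cancel]; ring
    omega
  · -- k = 0
    intro h1
    have hk0 : k = 0 := by
      by_contra h
      refine h1 ?_
      have := (hdvd_iff 1).mpr (by omega)
      rwa [pow_one] at this
    apply hfinal
    rw [hk0, pow_zero, Nat.totient_one, mul_one]
    rw [Nat.card_congr (Equiv.subtypeEquivRight
      (fun x : ZMod (p ^ 2) × ZMod (p ^ v) => AddMonoid.addOrderOf_eq_one_iff))]
    rw [Nat.card_eq_fintype_card, Fintype.card_subtype_eq]
end

section
/- Let p be a prime and n a positive integer with p dividing n but p² not dividing n, and let G = Z_{p²} × Z_n. Then (X + 1)^α divides the characteristic polynomial of the adjacency matrix of the power graph P(G), where α = Σ_{d ∣ n, p ∤ d} (φ(d) − 1) + (p+1)·Σ_{d ∣ n, p ∣ d} (φ(d) − 1) + p·Σ_{d ∣ n, p ∤ d} (φ(d·p²) − 1). -/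
open Polynomial

open AddSubgroup Finset

private lemma det_dvd_aux {R : Type*} [CommRing R] {V : Type*} [DecidableEq V] [Fintype V]
    (q : R) (r : V → V) (S : Finset V) (hr : ∀ x ∈ S, r x ∉ S) :
    ∀ M : Matrix V V R,
      (∀ x ∈ S, ∀ i, M i x =
        q * ((if i = x then 1 else 0) - (if i = r x then 1 else 0)) + M i (r x)) →
      q ^ S.card ∣ M.det := by
  classical
  induction S using Finset.induction_on with
  | empty => intro M _; simp
  | @insert a T haT ih =>
    intro M h
    have hra : r a ∉ insert a T := hr a (mem_insert_self a T)
    have hraa : r a ≠ a := fun e => hra (by rw [e]; exact mem_insert_self a T)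
    set d : V → R := fun i => (if i = a then 1 else 0) - (if i = r a then 1 else 0) with hd
    have hcol : (fun i => M i a) = q • d + (fun i => M i (r a)) := by
      funext i
      simpa [hd] using h a (mem_insert_self a T) i
    have hMdet : M.det = (M.updateCol a (q • d + fun i => M i (r a))).det := by
      rw [← hcol, Matrix.updateCol_eq_self]
    rw [hMdet, Matrix.det_updateCol_add, Matrix.det_updateCol_smul]
    have hzero : (M.updateCol a fun i => M i (r a)).det = 0 := by
      apply Matrix.det_zero_of_column_eq hraa.symm
      intro k
      rw [Matrix.updateCol_apply, Matrix.updateCol_apply]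
      simp [hraa.symm, hraa]
    rw [hzero, add_zero]
    have key : q ^ T.card ∣ (M.updateCol a d).det := by
      apply ih (fun x hx => fun hmem => hr x (mem_insert_of_mem hx) (mem_insert_of_mem hmem))
      intro x hx i
      have hxa : x ≠ a := fun e => haT (e ▸ hx)
      have hrxa : r x ≠ a := by
        intro e
        exact hr x (mem_insert_of_mem hx) (by rw [e]; exact mem_insert_self a T)
      rw [Matrix.updateCol_apply, Matrix.updateCol_apply, if_neg hxa, if_neg hrxa]
      exact h x (mem_insert_of_mem hx) i
    rw [Finset.card_insert_of_notMem haT, pow_succ, mul_comm (q ^ T.card) q]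
    exact mul_dvd_mul_left q key

private lemma det_dvd_of_classes {R : Type*} [CommRing R] {V β : Type*} [DecidableEq V]
    [DecidableEq β] [Fintype V] (q : R) (f : V → β) (M : Matrix V V R)
    (h : ∀ x y, f x = f y → ∀ i, M i x =
        q * ((if i = x then 1 else 0) - (if i = y then 1 else 0)) + M i y)
    (k : ℕ) (hk : k + (Finset.univ.image f).card ≤ Fintype.card V) :
    q ^ k ∣ M.det := by
  cases isEmpty_or_nonempty V with
  | inl hV =>
    have : k = 0 := by
      have := Fintype.card_eq_zero (α := V)
      omega
    subst this
    simp
  | inr hV =>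
    set r : V → V := fun x => Function.invFun f (f x) with hrdef
    have hfr : ∀ x, f (r x) = f x := fun x => Function.invFun_eq ⟨x, rfl⟩
    have hrr : ∀ x, r (r x) = r x := fun x => by
      show Function.invFun f (f (r x)) = r x
      rw [hfr x]
    set S : Finset V := Finset.univ.filter (fun x => ¬ r x = x) with hS
    have hrS : ∀ x ∈ S, r x ∉ S := by
      intro x hx hmem
      rw [hS, Finset.mem_filter] at hmem
      exact hmem.2 (hrr x)
    have hdvd : q ^ S.card ∣ M.det := by
      apply det_dvd_aux q r S hrS M
      intro x hx i
      exact h x (r x) (hfr x).symm i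
    refine dvd_trans (pow_dvd_pow q ?_) hdvd
    -- k ≤ S.card
    have hcardfix : (Finset.univ.filter (fun x => r x = x)).card = (Finset.univ.image f).card := by
      apply Finset.card_bij (fun x _ => f x)
      · intro x hx
        exact Finset.mem_image_of_mem f (Finset.mem_univ x)
      · intro x hx y hy hxy
        rw [Finset.mem_filter] at hx hy
        have : r x = r y := by rw [hrdef]; simp only [hxy]
        rw [hx.2, hy.2] at this
        exact this
      · intro b hb
        rw [Finset.mem_image] at hb
        obtain ⟨x, _, rfl⟩ := hb
        exact ⟨r x, Finset.mem_filter.mpr ⟨Finset.mem_univ _, hrr x⟩, hfr x⟩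
    have hsplit := Finset.card_filter_add_card_filter_not
      (s := (Finset.univ : Finset V)) (p := fun x => r x = x)
    rw [Finset.card_univ] at hsplit
    have hSc : S.card = (Finset.univ.filter (fun x => ¬ r x = x)).card := rfl
    omega

private lemma adjMat_eq_of_zmultiples_eq {G : Type*} [AddGroup G] [Fintype G]
    {x y i : G} (h : zmultiples x = zmultiples y) (hix : i ≠ x) (hiy : i ≠ y) :
    adjMat (addPowerGraph G) i x = adjMat (addPowerGraph G) i y := by
  have key : (addPowerGraph G).Adj i x ↔ (addPowerGraph G).Adj i y := by
    show (i ≠ x ∧ (i ∈ zmultiples x ∨ x ∈ zmultiples i)) ↔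
      (i ≠ y ∧ (i ∈ zmultiples y ∨ y ∈ zmultiples i))
    have h1 : i ∈ zmultiples x ↔ i ∈ zmultiples y := by rw [h]
    have h2 : x ∈ zmultiples i ↔ y ∈ zmultiples i := by
      rw [← AddSubgroup.zmultiples_le, ← AddSubgroup.zmultiples_le, h]
    simp [hix, hiy, h1, h2]
  unfold adjMat
  by_cases hadj : (addPowerGraph G).Adj i x
  · rw [if_pos hadj, if_pos (key.mp hadj)]
  · rw [if_neg hadj, if_neg (fun hc => hadj (key.mpr hc))]

private lemma adjMat_one_of_zmultiples_eq {G : Type*} [AddGroup G] [Fintype G]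
    {x y : G} (h : zmultiples x = zmultiples y) (hxy : x ≠ y) :
    adjMat (addPowerGraph G) x y = 1 := by
  have hadj : (addPowerGraph G).Adj x y :=
    ⟨hxy, Or.inl (h ▸ AddSubgroup.mem_zmultiples x)⟩
  unfold adjMat
  rw [if_pos hadj]

private lemma adjMat_diag {G : Type*} [AddGroup G] [Fintype G] (x : G) :
    adjMat (addPowerGraph G) x x = 0 := by
  unfold adjMat
  rw [if_neg ((addPowerGraph G).irrefl)]

private lemma charmatrix_col_rel {G : Type*} [AddGroup G] [Fintype G] [DecidableEq G]
    (x y : G) (h : zmultiples x = zmultiples y) (i : G) :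
    Matrix.charmatrix (adjMat (addPowerGraph G)) i x =
      ((X : Polynomial ℤ) + 1) * ((if i = x then 1 else 0) - (if i = y then 1 else 0)) +
      Matrix.charmatrix (adjMat (addPowerGraph G)) i y := by
  by_cases hxy : x = y
  · subst hxy; ring
  by_cases hix : i = x
  · subst hix
    rw [Matrix.charmatrix_apply_eq, Matrix.charmatrix_apply_ne _ _ _ hxy,
      adjMat_diag, adjMat_one_of_zmultiples_eq h hxy,
      if_pos rfl, if_neg hxy]
    simp only [map_one, map_zero]
    ring
  by_cases hiy : i = y
  · subst hiy
    rw [Matrix.charmatrix_apply_ne _ _ _ hix, Matrix.charmatrix_apply_eq,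
      adjMat_one_of_zmultiples_eq h.symm (fun e => hxy e.symm), adjMat_diag,
      if_neg hix, if_pos rfl]
    simp only [map_one, map_zero]
    ring
  · rw [Matrix.charmatrix_apply_ne _ _ _ hix, Matrix.charmatrix_apply_ne _ _ _ hiy,
      adjMat_eq_of_zmultiples_eq h hix hiy, if_neg hix, if_neg hiy]
    ring

private lemma totient_le_fiber {G : Type*} [AddGroup G] [Fintype G]
    [DecidableEq (AddSubgroup G)] (x : G) :
    Nat.totient (addOrderOf x) ≤
      (Finset.univ.filter (fun y => zmultiples y = zmultiples x)).card := by
  set k := addOrderOf x with hk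
  have hkpos : 0 < k := addOrderOf_pos x
  have hksmul : k • x = 0 := addOrderOf_nsmul_eq_zero x
  rw [Nat.totient]
  apply Finset.card_le_card_of_injOn (fun c => c • x)
  · intro c hc
    simp only [Finset.coe_filter, Set.mem_setOf_eq, Finset.mem_range] at hc
    obtain ⟨hclt, hcop⟩ := hc
    simp only [Finset.coe_filter, Set.mem_setOf_eq]
    refine ⟨Finset.mem_univ _, le_antisymm ?_ ?_⟩
    · rw [AddSubgroup.zmultiples_le]
      exact AddSubgroup.mem_zmultiples_iff.mpr ⟨(c : ℤ), natCast_zsmul x c⟩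
    · rw [AddSubgroup.zmultiples_le]
      rcases eq_or_lt_of_le (show 1 ≤ k from hkpos) with hk1 | hk1
      · -- k = 1, so x = 0
        have hx0 : x = 0 := AddMonoid.addOrderOf_eq_one_iff.mp (hk ▸ hk1.symm)
        rw [hx0]
        exact AddSubgroup.zero_mem _
      · obtain ⟨b, -, hb⟩ := Nat.exists_mul_mod_eq_one_of_coprime hcop.symm hk1
        have h1 : (c * b) • x = x := by
          conv_lhs => rw [← Nat.div_add_mod (c * b) k]
          rw [hb, add_nsmul, one_nsmul, mul_nsmul, hksmul, smul_zero, zero_add]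
        exact AddSubgroup.mem_zmultiples_iff.mpr
          ⟨(b : ℤ), by rw [natCast_zsmul, ← mul_nsmul, h1]⟩
  · intro c hc c' hc' hcc
    simp only [Finset.coe_filter, Set.mem_setOf_eq, Finset.mem_range] at hc hc'
    simp only at hcc
    rcases le_total c c' with hle | hle
    · have : (c' - c) • x = 0 := by
        rw [sub_nsmul x hle, hcc, add_neg_cancel]
      have hdvd : k ∣ c' - c := addOrderOf_dvd_of_nsmul_eq_zero this
      have := Nat.eq_zero_of_dvd_of_lt hdvd
      omega
    · have : (c - c') • x = 0 := by
        rw [sub_nsmul x hle, hcc, add_neg_cancel]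
      have hdvd : k ∣ c - c' := addOrderOf_dvd_of_nsmul_eq_zero this
      have := Nat.eq_zero_of_dvd_of_lt hdvd
      omega

private lemma count_le {V β ι : Type*} [Fintype V] [DecidableEq β] [DecidableEq ι]
    (f : V → β) (I : Finset ι) (F : ι → V) (w : ι → ℕ)
    (hinj : Set.InjOn (fun i => f (F i)) I)
    (hw : ∀ i ∈ I, w i + 1 ≤ (Finset.univ.filter (fun y => f y = f (F i))).card) :
    (∑ i ∈ I, w i) + (Finset.univ.image f).card ≤ Fintype.card V := by
  classical
  set T : Finset β := I.image (fun i => f (F i)) with hT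
  have hTsub : T ⊆ Finset.univ.image f := by
    intro b hb
    rw [hT, Finset.mem_image] at hb
    obtain ⟨i, _, rfl⟩ := hb
    exact Finset.mem_image_of_mem f (Finset.mem_univ _)
  have hcardV : Fintype.card V =
      ∑ b ∈ Finset.univ.image f, (Finset.univ.filter (fun y => f y = b)).card := by
    rw [← Finset.card_univ]
    exact Finset.card_eq_sum_card_fiberwise
      (fun y _ => Finset.mem_image_of_mem f (Finset.mem_univ y))
  have hsplit : ∑ b ∈ (Finset.univ.image f) \ T, (Finset.univ.filter (fun y => f y = b)).card
      + ∑ b ∈ T, (Finset.univ.filter (fun y => f y = b)).card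
      = ∑ b ∈ Finset.univ.image f, (Finset.univ.filter (fun y => f y = b)).card :=
    Finset.sum_sdiff hTsub
  have hT1 : ∑ b ∈ T, (Finset.univ.filter (fun y => f y = b)).card
      = ∑ i ∈ I, (Finset.univ.filter (fun y => f y = f (F i))).card := by
    rw [hT]
    exact Finset.sum_image (fun i hi j hj hij => hinj hi hj hij)
  have hTcard : T.card = I.card := Finset.card_image_of_injOn hinj
  have himgcard : ((Finset.univ.image f) \ T).card + T.card = (Finset.univ.image f).card :=
    Finset.card_sdiff_add_card_eq_card hTsub
  have hge1 : ((Finset.univ.image f) \ T).card ≤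
      ∑ b ∈ (Finset.univ.image f) \ T, (Finset.univ.filter (fun y => f y = b)).card := by
    have : ∀ b ∈ (Finset.univ.image f) \ T,
        1 ≤ (Finset.univ.filter (fun y => f y = b)).card := by
      intro b hb
      have hbimg : b ∈ Finset.univ.image f := (Finset.mem_sdiff.mp hb).1
      obtain ⟨y, _, rfl⟩ := Finset.mem_image.mp hbimg
      exact Finset.card_pos.mpr ⟨y, Finset.mem_filter.mpr ⟨Finset.mem_univ y, rfl⟩⟩
    calc ((Finset.univ.image f) \ T).card
        = ∑ _b ∈ (Finset.univ.image f) \ T, 1 := by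
          rw [Finset.sum_const, smul_eq_mul, mul_one]
      _ ≤ _ := Finset.sum_le_sum this
  have hge2 : (∑ i ∈ I, w i) + I.card ≤
      ∑ i ∈ I, (Finset.univ.filter (fun y => f y = f (F i))).card := by
    calc (∑ i ∈ I, w i) + I.card = ∑ i ∈ I, (w i + 1) := by
          rw [Finset.sum_add_distrib, Finset.sum_const, smul_eq_mul, mul_one]
      _ ≤ _ := Finset.sum_le_sum hw
  omega

section Construction

variable (p n : ℕ)

/-- The generator map: index `(d, j)` with `d ∣ n`, `j ≤ p`. -/
noncomputable def genF [NeZero (p ^ 2)] [NeZero n] : ℕ × ℕ → ZMod (p ^ 2) × ZMod n :=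
  fun dj =>
    if p ∣ dj.1 then
      (if dj.2 = p then (((p : ℕ) : ZMod (p ^ 2)), ((p * (n / dj.1) : ℕ) : ZMod n))
       else (((p * dj.2 : ℕ) : ZMod (p ^ 2)), ((n / dj.1 : ℕ) : ZMod n)))
    else
      (if dj.2 = p then (0, ((n / dj.1 : ℕ) : ZMod n))
       else (1, ((dj.2 * (n / p) + n / dj.1 : ℕ) : ZMod n)))

/-- The intended order of `genF (d, j)`. -/
def genOrd : ℕ × ℕ → ℕ :=
  fun dj => if p ∣ dj.1 then dj.1 else if dj.2 = p then dj.1 else dj.1 * p ^ 2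

variable {p n}

lemma ord_coe_div {d : ℕ} (hn : n ≠ 0) (hd : d ∣ n) :
    addOrderOf ((((n / d) : ℕ) : ZMod n)) = d := by
  rw [ZMod.addOrderOf_coe _ hn, Nat.gcd_eq_right (Nat.div_dvd_of_dvd hd),
    Nat.div_div_self hd hn]

lemma ord_coe_p_mul_div {d : ℕ} (hn : n ≠ 0) (hd : d ∣ n) (hpd : p ∣ d) :
    addOrderOf (((p * (n / d) : ℕ) : ZMod n)) = d / p := by
  have hdvd : p * (n / d) ∣ n := by
    obtain ⟨e, he⟩ := hpd
    refine ⟨e, ?_⟩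
    rw [mul_assoc, mul_comm (n/d) e, ← mul_assoc, ← he, Nat.mul_div_cancel' hd]
  rw [ZMod.addOrderOf_coe _ hn, Nat.gcd_eq_right hdvd, mul_comm p,
    ← Nat.div_div_eq_div_mul, Nat.div_div_self hd hn]

lemma ord_dvd_p_of_p_mul {j : ℕ} (hp : p ≠ 0) :
    addOrderOf (((p * j : ℕ) : ZMod (p ^ 2))) ∣ p := by
  apply addOrderOf_dvd_of_nsmul_eq_zero
  rw [nsmul_eq_mul, ← Nat.cast_mul]
  have : p * (p * j) = p ^ 2 * j := by ring
  rw [this, Nat.cast_mul, ZMod.natCast_self, zero_mul]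

lemma ord_coe_p (hp : p.Prime) [NeZero (p ^ 2)] :
    addOrderOf (((p : ℕ) : ZMod (p ^ 2))) = p := by
  rw [ZMod.addOrderOf_coe _ (NeZero.ne _)]
  have h1 : Nat.gcd (p ^ 2) p = p := Nat.gcd_eq_right ⟨p, (sq p)⟩
  rw [h1, sq, Nat.mul_div_cancel _ hp.pos]

lemma ord_coe_z {d j : ℕ} (hp : p.Prime) (hn : n ≠ 0) (hd : d ∣ n) (hpn : p ∣ n)
    (hp2n : ¬ p ^ 2 ∣ n) (hpd : ¬ p ∣ d) (hj : j ≠ 0) (hjp : j < p) :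
    addOrderOf (((j * (n / p) + n / d : ℕ) : ZMod n)) = p * d := by
  set m := n / p with hm
  have hnm : n = p * m := (Nat.mul_div_cancel' hpn).symm
  have hm0 : m ≠ 0 := by
    intro h; rw [h, mul_zero] at hnm; exact hn hnm
  have hdm : d ∣ m := by
    have : d ∣ p * m := hnm ▸ hd
    exact (Nat.Coprime.dvd_of_dvd_mul_left
      (Nat.Coprime.symm ((hp.coprime_iff_not_dvd).mpr hpd)) this)
  have hd0 : d ≠ 0 := fun h => hpd (h ▸ dvd_zero p)
  have hmd0 : m / d ≠ 0 := by
    have := Nat.div_pos (Nat.le_of_dvd (Nat.pos_of_ne_zero hm0) hdm) (Nat.pos_of_ne_zero hd0)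
    omega
  have hz : j * (n / p) + n / d = (m / d) * (j * d + p) := by
    have e1 : n / p = m := rfl
    have e2 : n / d = p * (m / d) := by
      rw [hnm, Nat.mul_div_assoc p hdm]
    have e3 : m = (m / d) * d := (Nat.div_mul_cancel hdm).symm
    rw [e1, e2]
    calc j * m + p * (m / d) = j * ((m / d) * d) + p * (m / d) := by rw [← e3]
      _ = (m / d) * (j * d + p) := by ring
  have hn' : n = (m / d) * (p * d) := by
    rw [hnm]
    calc p * m = p * ((m / d) * d) := by rw [Nat.div_mul_cancel hdm]
      _ = (m / d) * (p * d) := by ring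
  have hcop : Nat.Coprime (p * d) (j * d + p) := by
    have hc1 : Nat.Coprime p (j * d + p) := by
      rw [Nat.coprime_add_self_right]
      refine Nat.Coprime.mul_right ((hp.coprime_iff_not_dvd).mpr (fun h => ?_))
        ((hp.coprime_iff_not_dvd).mpr hpd)
      have := Nat.le_of_dvd (Nat.pos_of_ne_zero hj) h
      omega
    have hc2 : Nat.Coprime d (j * d + p) := by
      rw [add_comm, Nat.coprime_add_mul_right_right]
      exact Nat.Coprime.symm ((hp.coprime_iff_not_dvd).mpr hpd)
    exact Nat.Coprime.mul hc1 hc2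
  rw [ZMod.addOrderOf_coe _ hn, hz, hn', Nat.gcd_mul_left, hcop, mul_one,
    Nat.mul_div_cancel_left _ (Nat.pos_of_ne_zero hmd0)]

lemma genF_order (hp : p.Prime) [NeZero (p ^ 2)] [NeZero n] (hpn : p ∣ n)
    (hp2n : ¬ p ^ 2 ∣ n) {d j : ℕ} (hd : d ∣ n) (hjle : j < p + 1) :
    addOrderOf (genF p n (d, j)) = genOrd p (d, j) := by
  have hn : n ≠ 0 := NeZero.ne n
  have hp0 : p ≠ 0 := hp.ne_zero
  by_cases hpd : p ∣ d
  · by_cases hjp : j = p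
    · -- generator ((p : ZMod p²), p*(n/d))
      have hp2d : ¬ p ^ 2 ∣ d := fun h => hp2n (h.trans hd)
      have hpdp : ¬ p ∣ d / p := by
        intro h
        obtain ⟨e, he⟩ := h
        exact hp2d ⟨e, by rw [sq, mul_assoc, ← he, Nat.mul_div_cancel' hpd]⟩
      simp only [genF, genOrd, if_pos hpd, if_pos hjp]
      rw [Prod.addOrderOf_mk, ord_coe_p hp, ord_coe_p_mul_div hn hd hpd,
        Nat.Coprime.lcm_eq_mul ((hp.coprime_iff_not_dvd).mpr hpdp),
        Nat.mul_div_cancel' hpd]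
    · -- generator (p*j, n/d)
      simp only [genF, genOrd, if_pos hpd, if_neg hjp]
      rw [Prod.addOrderOf_mk, ord_coe_div hn hd]
      exact Nat.dvd_antisymm
        (Nat.lcm_dvd ((ord_dvd_p_of_p_mul hp0).trans hpd) dvd_rfl)
        (Nat.dvd_lcm_right _ _)
  · by_cases hjp : j = p
    · simp only [genF, genOrd, if_neg hpd, if_pos hjp]
      rw [Prod.addOrderOf_mk, ord_coe_div hn hd, addOrderOf_zero, Nat.lcm_one_left]
    · simp only [genF, genOrd, if_neg hpd, if_neg hjp]
      rw [Prod.addOrderOf_mk, ZMod.addOrderOf_one]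
      by_cases hj0 : j = 0
      · subst hj0
        rw [zero_mul, zero_add, ord_coe_div hn hd]
        rw [Nat.Coprime.lcm_eq_mul (Nat.Coprime.pow_left 2 ((hp.coprime_iff_not_dvd).mpr hpd))]
        ring
      · rw [ord_coe_z hp hn hd hpn hp2n hpd hj0 (by omega)]
        have e1 : p ^ 2 = p * p := sq p
        have e2 : p ^ 2 * d = p * (p * d) := by ring
        rw [e1]
        have : Nat.lcm (p * p) (p * d) = p * Nat.lcm p d := Nat.lcm_mul_left p p d
        rw [this, Nat.Coprime.lcm_eq_mul ((hp.coprime_iff_not_dvd).mpr hpd)]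
        ring

end Construction

private lemma exists_zsmul_of_zmultiples_eq {G : Type*} [AddGroup G] {a b : G}
    (h : zmultiples a = zmultiples b) : ∃ c : ℤ, c • a = b :=
  mem_zmultiples_iff.mp (h ▸ mem_zmultiples b)

private lemma ord_coe_div' {n d : ℕ} (hn : n ≠ 0) (hd : d ∣ n) :
    addOrderOf ((((n / d) : ℕ) : ZMod n)) = d := by
  rw [ZMod.addOrderOf_coe _ hn, Nat.gcd_eq_right (Nat.div_dvd_of_dvd hd),
    Nat.div_div_self hd hn]

-- Case A : same d, p ∣ d, both j, j' < p
private lemma distinct_A {p n d j j' : ℕ} (hp : p.Prime) [NeZero n] (hd : d ∣ n)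
    (hpd : p ∣ d) (hj : j < p) (hj' : j' < p)
    (hEx : ∃ c : ℤ, c • (Prod.mk ((p * j : ℕ) : ZMod (p ^ 2)) ((n / d : ℕ) : ZMod n))
      = Prod.mk ((p * j' : ℕ) : ZMod (p ^ 2)) ((n / d : ℕ) : ZMod n)) : j = j' := by
  obtain ⟨c, hc⟩ := hEx
  have h1 : c • (((p * j : ℕ) : ZMod (p ^ 2))) = ((p * j' : ℕ) : ZMod (p ^ 2)) :=
    congrArg Prod.fst hc
  have h2 : c • (((n / d : ℕ) : ZMod n)) = ((n / d : ℕ) : ZMod n) :=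
    congrArg Prod.snd hc
  -- from h2 : d ∣ c - 1
  have hdc : (d : ℤ) ∣ c - 1 := by
    rw [← ord_coe_div' (NeZero.ne n) hd]
    rw [addOrderOf_dvd_iff_zsmul_eq_zero, sub_zsmul, one_zsmul, h2, add_neg_cancel]
  -- from h1 : p ∣ c * j - j'
  have hpc : (p : ℤ) ∣ c * j - j' := by
    have hcast : ((c * (p * j) - p * j' : ℤ) : ZMod (p ^ 2)) = 0 := by
      rw [zsmul_eq_mul] at h1
      push_cast
      push_cast at h1
      rw [h1]
      ring
    have hdvd := (ZMod.intCast_zmod_eq_zero_iff_dvd _ (p ^ 2)).mp hcast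
    have he : (c * (p * j) - p * j' : ℤ) = p * (c * j - j') := by ring
    have he2 : ((p ^ 2 : ℕ) : ℤ) = (p : ℤ) * p := by push_cast; ring
    rw [he, he2] at hdvd
    exact (mul_dvd_mul_iff_left (by exact_mod_cast hp.ne_zero : (p : ℤ) ≠ 0)).mp hdvd
  have hpd' : (p : ℤ) ∣ (d : ℤ) := Int.natCast_dvd_natCast.mpr hpd
  have hpc1 : (p : ℤ) ∣ c - 1 := hpd'.trans hdc
  have hjj : (p : ℤ) ∣ (j : ℤ) - j' := by
    have : (j : ℤ) - j' = (c * j - j') - (c - 1) * j := by ring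
    rw [this]
    exact dvd_sub hpc (hpc1.mul_right j)
  have := Int.eq_zero_of_abs_lt_dvd hjj (by rw [abs_sub_lt_iff]; push_cast; omega)
  omega

-- Case B : same d, p ∣ d, one is the extra subgroup
private lemma distinct_B {p n d j : ℕ} (hp : p.Prime) [NeZero n] (hd : d ∣ n)
    (hpd : p ∣ d)
    (hEx : ∃ c : ℤ, c • (Prod.mk ((p : ℕ) : ZMod (p ^ 2)) ((p * (n / d) : ℕ) : ZMod n))
      = Prod.mk ((p * j : ℕ) : ZMod (p ^ 2)) ((n / d : ℕ) : ZMod n)) : False := by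
  obtain ⟨c, hc⟩ := hEx
  have h2 : c • (((p * (n / d) : ℕ) : ZMod n)) = ((n / d : ℕ) : ZMod n) :=
    congrArg Prod.snd hc
  have hzero : (c * p - 1) • (((n / d : ℕ) : ZMod n)) = 0 := by
    rw [zsmul_eq_mul] at h2 ⊢
    push_cast at h2 ⊢
    rw [sub_mul, one_mul, mul_assoc, h2, sub_self]
  have hdc : (d : ℤ) ∣ c * p - 1 := by
    rw [← ord_coe_div' (NeZero.ne n) hd, addOrderOf_dvd_iff_zsmul_eq_zero]
    exact hzero
  have hpd' : (p : ℤ) ∣ (d : ℤ) := Int.natCast_dvd_natCast.mpr hpd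
  have hp1 : (p : ℤ) ∣ 1 := by
    have h3 : (p : ℤ) ∣ c * p - 1 := hpd'.trans hdc
    have : (1 : ℤ) = c * p - (c * p - 1) := by ring
    rw [this]
    exact dvd_sub ⟨c, mul_comm c _⟩ h3
  have := Int.le_of_dvd one_pos hp1
  have := hp.two_le
  omega

-- Case C : same d, ¬ p ∣ d, both j j' < p
private lemma distinct_C {p n d j j' : ℕ} (hp : p.Prime) [NeZero n] (hd : d ∣ n)
    (hpn : p ∣ n) (hpd : ¬ p ∣ d) (hj : j < p) (hj' : j' < p)
    (hEx : ∃ c : ℤ, c • (Prod.mk (1 : ZMod (p ^ 2)) ((j * (n / p) + n / d : ℕ) : ZMod n))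
      = Prod.mk (1 : ZMod (p ^ 2)) ((j' * (n / p) + n / d : ℕ) : ZMod n)) : j = j' := by
  obtain ⟨c, hc⟩ := hEx
  have hn : n ≠ 0 := NeZero.ne n
  have h1 : c • (1 : ZMod (p ^ 2)) = 1 := congrArg Prod.fst hc
  have h2 : c • (((j * (n / p) + n / d : ℕ) : ZMod n))
      = ((j' * (n / p) + n / d : ℕ) : ZMod n) := congrArg Prod.snd hc
  have hc1 : ((p ^ 2 : ℕ) : ℤ) ∣ c - 1 := by
    rw [← ZMod.addOrderOf_one (p ^ 2), addOrderOf_dvd_iff_zsmul_eq_zero,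
      sub_zsmul, one_zsmul, h1, add_neg_cancel]
  -- basic arithmetic facts
  set m := n / p with hm
  have hnm : n = p * m := (Nat.mul_div_cancel' hpn).symm
  have hm0 : m ≠ 0 := by intro h; rw [h, mul_zero] at hnm; exact hn hnm
  have hdm : d ∣ m := Nat.Coprime.dvd_of_dvd_mul_left
    (Nat.Coprime.symm ((hp.coprime_iff_not_dvd).mpr hpd)) (hnm ▸ hd)
  have hd0 : d ≠ 0 := fun h => hpd (h ▸ dvd_zero p)
  have hmd0 : m / d ≠ 0 := by
    have := Nat.div_pos (Nat.le_of_dvd (Nat.pos_of_ne_zero hm0) hdm) (Nat.pos_of_ne_zero hd0)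
    omega
  have hzf : ∀ i : ℕ, i * (n / p) + n / d = (m / d) * (i * d + p) := by
    intro i
    have e2 : n / d = p * (m / d) := by rw [hnm, Nat.mul_div_assoc p hdm]
    have e3 : m = (m / d) * d := (Nat.div_mul_cancel hdm).symm
    calc i * (n / p) + n / d = i * ((m / d) * d) + p * (m / d) := by rw [← hm, ← e3, e2]
      _ = (m / d) * (i * d + p) := by ring
  have hn' : n = (m / d) * (p * d) := by
    rw [hnm]
    calc p * m = p * ((m / d) * d) := by rw [Nat.div_mul_cancel hdm]
      _ = (m / d) * (p * d) := by ring
  -- from h2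
  have hdvd : (n : ℤ) ∣ c * ((j * (n / p) + n / d : ℕ) : ℤ) - ((j' * (n / p) + n / d : ℕ) : ℤ) := by
    rw [← ZMod.intCast_zmod_eq_zero_iff_dvd]
    rw [zsmul_eq_mul] at h2
    rw [Int.cast_sub, Int.cast_mul, Int.cast_natCast, Int.cast_natCast, h2, sub_self]
  rw [hzf j, hzf j', hn'] at hdvd
  have hcancel : ((p * d : ℕ) : ℤ) ∣ c * ((j * d + p : ℕ) : ℤ) - ((j' * d + p : ℕ) : ℤ) := by
    have hmd0' : ((m / d : ℕ) : ℤ) ≠ 0 := Int.natCast_ne_zero.mpr hmd0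
    have he : (((m / d) * (j * d + p) : ℕ) : ℤ) = ((m / d : ℕ) : ℤ) * ((j * d + p : ℕ) : ℤ) := by
      push_cast; ring
    have he' : (((m / d) * (j' * d + p) : ℕ) : ℤ) = ((m / d : ℕ) : ℤ) * ((j' * d + p : ℕ) : ℤ) := by
      push_cast; ring
    have he'' : (((m / d) * (p * d) : ℕ) : ℤ) = ((m / d : ℕ) : ℤ) * ((p * d : ℕ) : ℤ) := by
      push_cast; ring
    rw [he, he', he''] at hdvd
    have : ((m / d : ℕ) : ℤ) * ((p * d : ℕ) : ℤ) ∣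
        ((m / d : ℕ) : ℤ) * (c * ((j * d + p : ℕ) : ℤ) - ((j' * d + p : ℕ) : ℤ)) := by
      have heq : ((m / d : ℕ) : ℤ) * (c * ((j * d + p : ℕ) : ℤ) - ((j' * d + p : ℕ) : ℤ))
          = c * (((m / d : ℕ) : ℤ) * ((j * d + p : ℕ) : ℤ))
            - ((m / d : ℕ) : ℤ) * ((j' * d + p : ℕ) : ℤ) := by ring
      rw [heq]
      exact hdvd
    exact (mul_dvd_mul_iff_left hmd0').mp this
  have hpdvd : (p : ℤ) ∣ ((j : ℤ) - j') * d := by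
    have hstep1 : (p : ℤ) ∣ c * ((j * d + p : ℕ) : ℤ) - ((j' * d + p : ℕ) : ℤ) :=
      dvd_trans ⟨d, by push_cast; ring⟩ hcancel
    have hstep2 : (p : ℤ) ∣ (c - 1) * ((j * d + p : ℕ) : ℤ) := by
      apply Dvd.dvd.mul_right
      refine dvd_trans ?_ hc1
      exact ⟨p, by push_cast; ring⟩
    have heq : ((j : ℤ) - j') * d
        = (c * ((j * d + p : ℕ) : ℤ) - ((j' * d + p : ℕ) : ℤ)) - (c - 1) * ((j * d + p : ℕ) : ℤ) := by
      push_cast; ring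
    rw [heq]
    exact dvd_sub hstep1 hstep2
  have hpj : (p : ℤ) ∣ (j : ℤ) - j' := by
    rcases (Nat.prime_iff_prime_int.mp hp).dvd_mul.mp hpdvd with h | h
    · exact h
    · exact absurd (Int.natCast_dvd_natCast.mp h) hpd
  have := Int.eq_zero_of_abs_lt_dvd hpj (by rw [abs_sub_lt_iff]; push_cast; omega)
  omega

lemma genF_injOn (hp : p.Prime) [NeZero (p ^ 2)] [NeZero n] (hpn : p ∣ n)
    (hp2n : ¬ p ^ 2 ∣ n) :
    Set.InjOn (fun dj => zmultiples (genF p n dj))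
      ((n.divisors ×ˢ Finset.range (p + 1)) : Finset (ℕ × ℕ)) := by
  have hp0 : p ≠ 0 := hp.ne_zero
  have hp2 : p ^ 2 ≠ 0 := pow_ne_zero 2 hp0
  rintro ⟨d, j⟩ ha ⟨d', j'⟩ hb h
  simp only [Finset.coe_product, Set.mem_prod, Finset.mem_coe, Nat.mem_divisors,
    Finset.mem_range] at ha hb
  obtain ⟨⟨hd, hn0⟩, hjle⟩ := ha
  obtain ⟨⟨hd', _⟩, hjle'⟩ := hb
  simp only at h
  have hord : genOrd p (d, j) = genOrd p (d', j') := by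
    rw [← genF_order hp hpn hp2n hd hjle, ← genF_order hp hpn hp2n hd' hjle',
      ← Nat.card_zmultiples, ← Nat.card_zmultiples, h]
  by_cases hpd : p ∣ d <;> by_cases hpd' : p ∣ d'
  · -- both p ∣
    have hdd : d = d' := by
      simpa [genOrd, hpd, hpd'] using hord
    subst hdd
    by_cases hjp : j = p <;> by_cases hjp' : j' = p
    · rw [hjp, hjp']
    · exfalso
      have hj'lt : j' < p := by omega
      apply distinct_B (j := j') hp hd hpd
      have := exists_zsmul_of_zmultiples_eq h
      simpa [genF, hpd, hjp, hjp'] using this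
    · exfalso
      have hjlt : j < p := by omega
      apply distinct_B (j := j) hp hd hpd
      have := exists_zsmul_of_zmultiples_eq h.symm
      simpa [genF, hpd, hjp, hjp'] using this
    · have hjlt : j < p := by omega
      have hj'lt : j' < p := by omega
      have := exists_zsmul_of_zmultiples_eq h
      have hjj : j = j' := by
        apply distinct_A hp hd hpd hjlt hj'lt
        simpa [genF, hpd, hjp, hjp'] using this
      rw [hjj]
  · exfalso
    -- p ∣ d, ¬ p ∣ d'
    by_cases hjp' : j' = p
    · have : d = d' := by simpa [genOrd, hpd, hpd', hjp'] using hord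
      exact hpd' (this ▸ hpd)
    · have : d = d' * p ^ 2 := by simpa [genOrd, hpd, hpd', hjp'] using hord
      exact hp2n (dvd_trans (this ▸ Dvd.intro d' (mul_comm (p ^ 2) d')) hd)
  · exfalso
    by_cases hjp : j = p
    · have : d = d' := by simpa [genOrd, hpd, hpd', hjp] using hord
      exact hpd (this ▸ hpd')
    · have : d * p ^ 2 = d' := by simpa [genOrd, hpd, hpd', hjp] using hord
      exact hp2n (dvd_trans (this ▸ Dvd.intro d (mul_comm (p ^ 2) d) : p ^ 2 ∣ d') hd')
  · -- neither
    by_cases hjp : j = p <;> by_cases hjp' : j' = p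
    · have hdd : d = d' := by simpa [genOrd, hpd, hpd', hjp, hjp'] using hord
      rw [hdd, hjp, hjp']
    · exfalso
      have : d = d' * p ^ 2 := by simpa [genOrd, hpd, hpd', hjp, hjp'] using hord
      exact hpd (this ▸ (Dvd.intro (d' * p) (by ring)))
    · exfalso
      have : d * p ^ 2 = d' := by simpa [genOrd, hpd, hpd', hjp, hjp'] using hord
      exact hpd' (this ▸ (Dvd.intro (d * p) (by ring)))
    · have hdd : d = d' := by
        have : d * p ^ 2 = d' * p ^ 2 := by simpa [genOrd, hpd, hpd', hjp, hjp'] using hord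
        exact Nat.eq_of_mul_eq_mul_right (Nat.pos_of_ne_zero hp2) this
      subst hdd
      have hjlt : j < p := by omega
      have hj'lt : j' < p := by omega
      have := exists_zsmul_of_zmultiples_eq h
      have hjj : j = j' := by
        apply distinct_C hp hd hpn hpd hjlt hj'lt
        simpa [genF, hpd, hjp, hjp'] using this
      rw [hjj]


private lemma sum_weights {p n : ℕ} (hp : p.Prime) :
    ∑ dj ∈ n.divisors ×ˢ Finset.range (p + 1), (Nat.totient (genOrd p dj) - 1)
    = (∑ d ∈ n.divisors.filter (fun d => ¬ p ∣ d), (Nat.totient d - 1) +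
       (p + 1) * ∑ d ∈ n.divisors.filter (fun d => p ∣ d), (Nat.totient d - 1) +
       p * ∑ d ∈ n.divisors.filter (fun d => ¬ p ∣ d), (Nat.totient (d * p ^ 2) - 1)) := by
  classical
  rw [Finset.sum_product]
  rw [← Finset.sum_filter_add_sum_filter_not n.divisors (fun d => p ∣ d)]
  have e1 : ∑ d ∈ n.divisors.filter (fun d => p ∣ d),
      (∑ j ∈ Finset.range (p + 1), (Nat.totient (genOrd p (d, j)) - 1))
      = (p + 1) * ∑ d ∈ n.divisors.filter (fun d => p ∣ d), (Nat.totient d - 1) := by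
    rw [Finset.mul_sum]
    apply Finset.sum_congr rfl
    intro d hd
    have hpd : p ∣ d := (Finset.mem_filter.mp hd).2
    have : ∀ j ∈ Finset.range (p + 1),
        Nat.totient (genOrd p (d, j)) - 1 = Nat.totient d - 1 := by
      intro j _
      simp [genOrd, hpd]
    rw [Finset.sum_congr rfl this, Finset.sum_const, Finset.card_range, smul_eq_mul]
  have e2 : ∑ d ∈ n.divisors.filter (fun d => ¬ p ∣ d),
      (∑ j ∈ Finset.range (p + 1), (Nat.totient (genOrd p (d, j)) - 1))
      = ∑ d ∈ n.divisors.filter (fun d => ¬ p ∣ d),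
        ((Nat.totient d - 1) + p * (Nat.totient (d * p ^ 2) - 1)) := by
    apply Finset.sum_congr rfl
    intro d hd
    have hpd : ¬ p ∣ d := (Finset.mem_filter.mp hd).2
    rw [Finset.sum_range_succ]
    have h1 : ∀ j ∈ Finset.range p,
        Nat.totient (genOrd p (d, j)) - 1 = Nat.totient (d * p ^ 2) - 1 := by
      intro j hj
      have : j ≠ p := by
        have := Finset.mem_range.mp hj; omega
      simp [genOrd, hpd, this]
    rw [Finset.sum_congr rfl h1, Finset.sum_const, Finset.card_range, smul_eq_mul]
    simp [genOrd, hpd]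
    ring
  rw [e1, e2, Finset.sum_add_distrib, ← Finset.mul_sum]
  ring

/-- For a prime `p` with `p ∣ n` and `p² ∤ n`, `(X + 1) ^ α` divides the characteristic
polynomial of the adjacency matrix of the power graph of `Z_{p²} × Z_n`, where
`α = Σ_{d ∣ n, p ∤ d} (φ(d)-1) + (p+1) Σ_{d ∣ n, p ∣ d} (φ(d)-1)
  + p Σ_{d ∣ n, p ∤ d} (φ(d·p²)-1)`. -/
theorem charpoly_power_graph_Zp2_Zn_p_not_sq (p n : ℕ) (hp : p.Prime) [NeZero n]
    (h1 : p ∣ n) (h2 : ¬ p ^ 2 ∣ n) :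
    letI : NeZero (p ^ 2) := ⟨pow_ne_zero 2 hp.ne_zero⟩
    ((X : Polynomial ℤ) + 1) ^
        (∑ d ∈ n.divisors.filter (fun d => ¬ p ∣ d), (Nat.totient d - 1) +
         (p + 1) * ∑ d ∈ n.divisors.filter (fun d => p ∣ d), (Nat.totient d - 1) +
         p * ∑ d ∈ n.divisors.filter (fun d => ¬ p ∣ d), (Nat.totient (d * p ^ 2) - 1)) ∣
      Matrix.charpoly (adjMat (addPowerGraph (ZMod (p ^ 2) × ZMod n))) := by
  haveI : NeZero (p ^ 2) := ⟨pow_ne_zero 2 hp.ne_zero⟩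
  classical
  set α := (∑ d ∈ n.divisors.filter (fun d => ¬ p ∣ d), (Nat.totient d - 1) +
         (p + 1) * ∑ d ∈ n.divisors.filter (fun d => p ∣ d), (Nat.totient d - 1) +
         p * ∑ d ∈ n.divisors.filter (fun d => ¬ p ∣ d), (Nat.totient (d * p ^ 2) - 1)) with hα
  show ((X : Polynomial ℤ) + 1) ^ α ∣
      Matrix.charpoly (adjMat (addPowerGraph (ZMod (p ^ 2) × ZMod n)))
  rw [Matrix.charpoly]
  apply det_dvd_of_classes ((X : Polynomial ℤ) + 1)
    (fun x : ZMod (p ^ 2) × ZMod n => zmultiples x)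
    _ (fun x y hxy i => charmatrix_col_rel x y hxy i) α
  -- counting
  have hw : ∀ i ∈ n.divisors ×ˢ Finset.range (p + 1),
      (Nat.totient (genOrd p i) - 1) + 1 ≤
      (Finset.univ.filter (fun y : ZMod (p ^ 2) × ZMod n =>
        zmultiples y = zmultiples (genF p n i))).card := by
    rintro ⟨d, j⟩ hi
    rw [Finset.mem_product, Nat.mem_divisors, Finset.mem_range] at hi
    obtain ⟨⟨hd, hn0⟩, hjle⟩ := hi
    have hd0 : d ≠ 0 := by
      rintro rfl
      exact hn0 (zero_dvd_iff.mp hd)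
    have hordpos : 0 < genOrd p (d, j) := by
      have : p ^ 2 ≠ 0 := pow_ne_zero 2 hp.ne_zero
      have hdpos : 0 < d := Nat.pos_of_ne_zero hd0
      have hppos : 0 < p ^ 2 := Nat.pos_of_ne_zero this
      simp only [genOrd]
      split
      · exact hdpos
      · split
        · exact hdpos
        · exact Nat.mul_pos hdpos hppos
    have htot : 0 < Nat.totient (genOrd p (d, j)) := Nat.totient_pos.mpr hordpos
    have hfib := totient_le_fiber (genF p n (d, j))
    rw [genF_order hp h1 h2 hd hjle] at hfib
    simp only [Prod.mk.eta] at hfib ⊢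
    omega
  have hcount := count_le (fun x : ZMod (p ^ 2) × ZMod n => zmultiples x)
    (n.divisors ×ˢ Finset.range (p + 1)) (genF p n)
    (fun dj => Nat.totient (genOrd p dj) - 1) (genF_injOn hp h1 h2) hw
  rw [sum_weights hp, ← hα] at hcount
  exact hcount
end
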